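/- arXiv:1909.02854 — 6 statements merged into one kernel-verified Lean document; each statement's English description precedes it below -/
import Mathlib

section
/- Let Ω be a countably infinite set, r : Ω* → [0,1] a measure representation, ρ ∈ Ω*, and E ⊆ Ω* a prefix-free set. Let E[ρ] be the set of σ ∈ E having ρ as a prefix. If every infinite sequence extending ρ has a prefix in E[ρ], then Σ_{σ∈E[ρ]} r(σ) = r(ρ). -/
open scoped ENNReal

/-- A set of finite strings is prefix-free. -/
def prefixFree {Γ : Type*} (E : Set (List Γ)) : Prop :=
  ∀ σ ∈ E, ∀ τ ∈ E, σ <+: τ → σ = τ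

/-- The prefix of length `n` of an infinite sequence. -/
def pre {Γ : Type*} (α : ℕ → Γ) (n : ℕ) : List Γ := List.ofFn fun i : Fin n => α i

/-- The open set generated by a set of strings: sequences having some prefix in `S`. -/
def cyl {Γ : Type*} (S : Set (List Γ)) : Set (ℕ → Γ) := {α | ∃ n, pre α n ∈ S}

/-- `r` is a measure representation over `Ω`: values in `[0,1]` and
`r σ = ∑_{a ∈ Ω} r (σ a)` for every string `σ`. -/
def MeasRep {Ω : Type*} (r : List Ω → ℝ) : Prop :=
  (∀ σ, 0 ≤ r σ ∧ r σ ≤ 1) ∧ ∀ σ : List Ω, HasSum (fun a : Ω => r (σ ++ [a])) (r σ)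

section AuxStmt1

variable {Ω : Type*}

lemma aux_exists_snoc {τ σ : List Ω} (hp : τ <+: σ) (hne : τ ≠ σ) :
    ∃ a, τ ++ [a] <+: σ := by
  obtain ⟨u, rfl⟩ := hp
  cases u with
  | nil => simp at hne
  | cons a u => exact ⟨a, u, by simp⟩

lemma aux_snoc_unique {τ σ : List Ω} {a b : Ω} (ha : τ ++ [a] <+: σ)
    (hb : τ ++ [b] <+: σ) : a = b := by
  have h1 : τ ++ [a] <+: τ ++ [b] :=
    List.prefix_of_prefix_length_le ha hb (by simp)
  have h2 : τ ++ [a] = τ ++ [b] := h1.eq_of_length_le (by simp)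
  simpa using List.append_cancel_left h2

lemma aux_getD {τ σ : List Ω} {a : Ω} (d : Ω) (ha : τ ++ [a] <+: σ) :
    σ.getD τ.length d = a := by
  have hlt : τ.length < (τ ++ [a]).length := by simp
  have hlt2 : τ.length < σ.length := lt_of_lt_of_le hlt ha.length_le
  have := ha.getElem (i := τ.length) hlt
  rw [List.getD_eq_getElem σ d hlt2, ← this]
  simp

open Classical in
noncomputable def Hf (r' : List Ω → ℝ≥0∞) (E : Set (List Ω)) (τ σ : List Ω) : ℝ≥0∞ :=
  if σ ∈ E ∧ τ <+: σ then r' σ else 0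

noncomputable def Sf (r' : List Ω → ℝ≥0∞) (E : Set (List Ω)) (τ : List Ω) : ℝ≥0∞ :=
  ∑' σ, Hf r' E τ σ

variable {r' : List Ω → ℝ≥0∞} {E : Set (List Ω)}

lemma Hf_ne_zero {τ σ : List Ω} (h : Hf r' E τ σ ≠ 0) :
    σ ∈ E ∧ τ <+: σ ∧ Hf r' E τ σ = r' σ := by
  by_cases hc : σ ∈ E ∧ τ <+: σ
  · exact ⟨hc.1, hc.2, by simp [Hf, hc]⟩
  · simp [Hf, hc] at h

lemma Hf_eq_of_mem {τ σ : List Ω} (h1 : σ ∈ E) (h2 : τ <+: σ) :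
    Hf r' E τ σ = r' σ := by simp [Hf, h1, h2]

lemma le_Sf_of_mem {τ : List Ω} (h : τ ∈ E) : r' τ ≤ Sf r' E τ := by
  have := ENNReal.le_tsum (f := Hf r' E τ) τ
  rwa [Hf_eq_of_mem h List.prefix_rfl] at this

lemma Sf_partition {τ : List Ω} (hτ : τ ∉ E) :
    Sf r' E τ = ∑' a, Sf r' E (τ ++ [a]) := by
  have key : ∑' σ, Hf r' E τ σ = ∑' p : Ω × List Ω, Hf r' E (τ ++ [p.1]) p.2 := by
    apply tsum_eq_tsum_of_ne_zero_bij (fun p => (p : Ω × List Ω).2)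
    · rintro ⟨p, hp⟩ ⟨q, hq⟩ (hpq : p.2 = q.2)
      obtain ⟨hpE, hppre, -⟩ := Hf_ne_zero hp
      obtain ⟨hqE, hqpre, -⟩ := Hf_ne_zero hq
      rw [hpq] at hppre
      have : p.1 = q.1 := aux_snoc_unique hppre hqpre
      exact Subtype.ext (Prod.ext this hpq)
    · intro σ hσ
      have h0 : Hf r' E τ σ ≠ 0 := hσ
      obtain ⟨hσE, hσpre, hval⟩ := Hf_ne_zero h0
      have hne : τ ≠ σ := by rintro rfl; exact hτ hσE
      obtain ⟨a, ha⟩ := aux_exists_snoc hσpre hne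
      have hmem : Hf r' E (τ ++ [a]) σ ≠ 0 := by
        rw [Hf_eq_of_mem hσE ha]
        rw [hval] at h0
        exact h0
      exact ⟨⟨(a, σ), hmem⟩, rfl⟩
    · rintro ⟨p, hp⟩
      obtain ⟨hpE, hppre, hval⟩ := Hf_ne_zero hp
      have : τ <+: p.2 := ((τ.prefix_append [p.1]).trans hppre)
      rw [Hf_eq_of_mem hpE this, hval]
  rw [Sf, key]
  simp only [Sf]
  exact ENNReal.tsum_prod (f := fun a σ => Hf r' E (τ ++ [a]) σ)

lemma finsum_Hf_le (hE : prefixFree E) (hnode : ∀ τ : List Ω, r' τ = ∑' a, r' (τ ++ [a]))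
    [Nonempty Ω] :
    ∀ (n : ℕ) (τ : List Ω) (F : Finset (List Ω)),
      (∀ σ ∈ F, σ.length ≤ τ.length + n) → ∑ σ ∈ F, Hf r' E τ σ ≤ r' τ := by
  intro n
  induction n with
  | zero =>
    intro τ F hF
    classical
    calc ∑ σ ∈ F, Hf r' E τ σ ≤ ∑ σ ∈ F, if σ = τ then r' τ else 0 := by
          apply Finset.sum_le_sum
          intro σ hσ
          by_cases h0 : Hf r' E τ σ = 0
          · rw [h0]; positivity
          · obtain ⟨hσE, hσpre, hval⟩ := Hf_ne_zero h0
            have heq : σ = τ := (hσpre.eq_of_length_le (by simpa using hF σ hσ)).symm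
            subst heq
            rw [Hf_eq_of_mem hσE List.prefix_rfl, if_pos rfl]
      _ ≤ r' τ := by
          classical
          rw [Finset.sum_ite_eq' F τ (fun _ => r' τ)]
          split <;> simp
  | succ n ih =>
    intro τ F hF
    classical
    by_cases hτ : τ ∈ E
    · calc ∑ σ ∈ F, Hf r' E τ σ ≤ ∑ σ ∈ F, if σ = τ then r' τ else 0 := by
            apply Finset.sum_le_sum
            intro σ hσ
            by_cases h0 : Hf r' E τ σ = 0
            · rw [h0]; positivity
            · obtain ⟨hσE, hσpre, hval⟩ := Hf_ne_zero h0
              have heq : τ = σ := hE τ hτ σ hσE hσpre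
              subst heq
              rw [Hf_eq_of_mem hσE List.prefix_rfl, if_pos rfl]
        _ ≤ r' τ := by
            classical
            rw [Finset.sum_ite_eq' F τ (fun _ => r' τ)]
            split <;> simp
    · classical
      set d : Ω := Classical.arbitrary Ω with hd
      set A : Finset Ω := F.image (fun σ => σ.getD τ.length d) with hA
      calc ∑ σ ∈ F, Hf r' E τ σ
          ≤ ∑ σ ∈ F, ∑ a ∈ A, if τ ++ [a] <+: σ then Hf r' E τ σ else 0 := by
            apply Finset.sum_le_sum
            intro σ hσ
            by_cases h0 : Hf r' E τ σ = 0
            · rw [h0]; positivity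
            · obtain ⟨hσE, hσpre, hval⟩ := Hf_ne_zero h0
              have hne : τ ≠ σ := by rintro rfl; exact hτ hσE
              obtain ⟨a, ha⟩ := aux_exists_snoc hσpre hne
              have haA : a ∈ A := by
                rw [hA]
                apply Finset.mem_image.mpr
                exact ⟨σ, hσ, aux_getD d ha⟩
              have := Finset.single_le_sum
                (f := fun a => if τ ++ [a] <+: σ then Hf r' E τ σ else 0)
                (fun i _ => by positivity) haA
              simpa [ha] using this
        _ = ∑ a ∈ A, ∑ σ ∈ F, if τ ++ [a] <+: σ then Hf r' E τ σ else 0 :=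
            Finset.sum_comm
        _ ≤ ∑ a ∈ A, r' (τ ++ [a]) := by
            apply Finset.sum_le_sum
            intro a _
            have heq : ∀ σ ∈ F,
                (if τ ++ [a] <+: σ then Hf r' E τ σ else 0) = Hf r' E (τ ++ [a]) σ := by
              intro σ _
              by_cases hpre : τ ++ [a] <+: σ
              · by_cases hσE : σ ∈ E
                · rw [if_pos hpre, Hf_eq_of_mem hσE hpre,
                    Hf_eq_of_mem hσE ((τ.prefix_append [a]).trans hpre)]
                · simp [Hf, hpre, hσE]
              · simp [Hf, hpre]
            rw [Finset.sum_congr rfl heq]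
            apply ih (τ ++ [a]) F
            intro σ hσ
            have := hF σ hσ
            simpa [Nat.add_assoc, Nat.add_comm 1 n] using this
        _ ≤ ∑' a, r' (τ ++ [a]) := ENNReal.sum_le_tsum A
        _ = r' τ := (hnode τ).symm

lemma Sf_le (hE : prefixFree E) (hnode : ∀ τ : List Ω, r' τ = ∑' a, r' (τ ++ [a]))
    [Nonempty Ω] (τ : List Ω) : Sf r' E τ ≤ r' τ := by
  rw [Sf, ENNReal.tsum_eq_iSup_sum]
  apply iSup_le
  intro F
  apply finsum_Hf_le hE hnode (F.sup List.length) τ F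
  intro σ hσ
  exact le_trans (Finset.le_sup (f := List.length) hσ) (Nat.le_add_left _ _)

lemma Sf_step (hnode : ∀ τ : List Ω, r' τ = ∑' a, r' (τ ++ [a])) {τ : List Ω}
    (hlt : Sf r' E τ < r' τ) : ∃ a, Sf r' E (τ ++ [a]) < r' (τ ++ [a]) := by
  have hτ : τ ∉ E := fun hmem => absurd hlt (not_lt.mpr (le_Sf_of_mem hmem))
  by_contra hcon
  push_neg at hcon
  have : r' τ ≤ Sf r' E τ := by
    rw [hnode τ, Sf_partition hτ]
    exact ENNReal.tsum_le_tsum hcon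
  exact absurd hlt (not_lt.mpr this)

end AuxStmt1

/-- If `E` is prefix-free and every infinite sequence extending `ρ`
has a prefix in `E[ρ] = {σ ∈ E | ρ is a prefix of σ}`, then `∑_{σ ∈ E[ρ]} r σ = r ρ`. -/
theorem stmt1 {Ω : Type*} [Countable Ω] [Infinite Ω] (r : List Ω → ℝ)
    (hr : MeasRep r) (ρ : List Ω) (E : Set (List Ω)) (hE : prefixFree E)
    (h : cyl {ρ} ⊆ cyl {σ ∈ E | ρ <+: σ}) :
    HasSum (fun σ : {σ ∈ E | ρ <+: σ} => r (σ : List Ω)) (r ρ) := by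
  classical
  set r' : List Ω → ℝ≥0∞ := fun σ => ENNReal.ofReal (r σ) with hr'
  have hnode : ∀ τ : List Ω, r' τ = ∑' a, r' (τ ++ [a]) := by
    intro τ
    have hs := hr.2 τ
    rw [hr']
    simp only
    rw [← hs.tsum_eq]
    exact ENNReal.ofReal_tsum_of_nonneg (fun a => (hr.1 _).1) hs.summable
  have hnotlt : ¬ Sf r' E ρ < r' ρ := by
    intro hlt
    let next : {τ // Sf r' E τ < r' τ} → {τ // Sf r' E τ < r' τ} := fun τ =>
      ⟨τ.1 ++ [(Sf_step hnode τ.2).choose], (Sf_step hnode τ.2).choose_spec⟩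
    let u : ℕ → {τ // Sf r' E τ < r' τ} := fun n => next^[n] ⟨ρ, hlt⟩
    let t : ℕ → List Ω := fun n => (u n).1
    have hinv : ∀ n, Sf r' E (t n) < r' (t n) := fun n => (u n).2
    have ht0 : t 0 = ρ := rfl
    have htsucc : ∀ n, ∃ a, t (n + 1) = t n ++ [a] := by
      intro n
      have hiter : u (n + 1) = next (u n) := Function.iterate_succ_apply' next n _
      exact ⟨_, congrArg Subtype.val hiter⟩
    have hlen : ∀ n, (t n).length = ρ.length + n := by
      intro n
      induction n with
      | zero => simp [ht0]
      | succ n ih =>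
        obtain ⟨a, ha⟩ := htsucc n
        rw [ha]
        simp [ih]
        omega
    have hmono : ∀ m n, m ≤ n → t m <+: t n := by
      intro m n hmn
      induction n, hmn using Nat.le_induction with
      | base => exact List.prefix_rfl
      | succ n hmn ih =>
        obtain ⟨a, ha⟩ := htsucc n
        rw [ha]
        exact ih.trans ((t n).prefix_append [a])
    let α : ℕ → Ω := fun i => (t (i + 1)).getD i (Classical.arbitrary Ω)
    have hα : ∀ n, pre α (ρ.length + n) = t n := by
      intro n
      apply List.ext_getElem
      · simp [pre, hlen n]
      · intro i h1 h2
        have hig : (pre α (ρ.length + n))[i] = α i := by simp [pre]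
        rw [hig]
        have hi1 : i < (t (i + 1)).length := by rw [hlen]; omega
        have hgd : α i = (t (i + 1))[i] := List.getD_eq_getElem _ _ hi1
        rw [hgd]
        rcases le_or_gt (i + 1) n with hc | hc
        · exact (hmono _ _ hc).getElem hi1
        · exact ((hmono n (i + 1) (by omega)).getElem h2).symm
    have hmem : α ∈ cyl {ρ} := by
      refine ⟨ρ.length, ?_⟩
      have := hα 0
      rw [Nat.add_zero, ht0] at this
      simp [this]
    obtain ⟨n, hn1, hn2⟩ := h hmem
    have hlenp : (pre α n).length = n := by simp [pre]
    have hge : ρ.length ≤ n := by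
      have := hn2.length_le
      rwa [hlenp] at this
    obtain ⟨m, rfl⟩ := Nat.exists_eq_add_of_le hge
    rw [hα m] at hn1
    exact absurd (le_Sf_of_mem hn1) (not_le.mpr (hinv m))
  have hS : Sf r' E ρ = r' ρ := le_antisymm (Sf_le hE hnode ρ) (not_lt.mp hnotlt)
  have hsub : ∑' σ : {σ ∈ E | ρ <+: σ}, r' σ = r' ρ := by
    rw [tsum_subtype]
    rw [← hS, Sf]
    apply tsum_congr
    intro σ
    by_cases hc : σ ∈ E ∧ ρ <+: σ
    · rw [Set.indicator_of_mem (by exact hc) r', Hf_eq_of_mem hc.1 hc.2]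
    · rw [Set.indicator_of_notMem (by exact hc) r']
      simp [Hf, hc]
  have hnetop : (∑' σ : {σ ∈ E | ρ <+: σ}, r' σ) ≠ ⊤ := by
    rw [hsub]; exact ENNReal.ofReal_ne_top
  have hsumm : Summable (fun σ : {σ ∈ E | ρ <+: σ} => r (σ : List Ω)) := by
    have hs := ENNReal.summable_toReal hnetop
    exact hs.congr fun σ => ENNReal.toReal_ofReal (hr.1 _).1
  have htsum : ∑' σ : {σ ∈ E | ρ <+: σ}, r (σ : List Ω) = r ρ := by
    have h1 := ENNReal.tsum_toReal_eq
      (f := fun σ : {σ ∈ E | ρ <+: σ} => r' σ) (fun _ => ENNReal.ofReal_ne_top)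
    rw [hsub, ENNReal.toReal_ofReal (hr.1 ρ).1] at h1
    rw [h1]
    exact tsum_congr fun σ => (ENNReal.toReal_ofReal (hr.1 _).1).symm
  exact htsum ▸ hsumm.hasSum
end

section
/- Let Ω be a countably infinite set and r a measure representation over Ω. If E and F are prefix-free subsets of Ω* with [E]≺ ⊆ [F]≺ (every infinite sequence with a prefix in E has a prefix in F), then Σ_{σ∈E} r(σ) ≤ Σ_{σ∈F} r(σ). -/
open scoped ENNReal

namespace Stmt2Aux

variable {Ω : Type*}

private lemma prefix_comparable {l₁ l₂ l₃ : List Ω} (h₁ : l₁ <+: l₃) (h₂ : l₂ <+: l₃) :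
    l₁ <+: l₂ ∨ l₂ <+: l₁ := by
  rcases le_total l₁.length l₂.length with h | h
  · exact Or.inl (List.prefix_of_prefix_length_le h₁ h₂ h)
  · exact Or.inr (List.prefix_of_prefix_length_le h₂ h₁ h)

private lemma prefix_antisymm {l₁ l₂ : List Ω} (h₁ : l₁ <+: l₂) (h₂ : l₂ <+: l₁) : l₁ = l₂ :=
  h₁.eq_of_length (Nat.le_antisymm h₁.length_le h₂.length_le)

private lemma take_of_prefix {l₁ l₂ : List Ω} (h : l₁ <+: l₂) : l₂.take l₁.length = l₁ := by
  obtain ⟨t, rfl⟩ := h; exact List.take_left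

private lemma snoc_prefix {σ τ : List Ω} (h : σ <+: τ) (hlt : σ.length < τ.length) :
    σ ++ [τ[σ.length]] <+: τ := by
  have h1 : τ.take (σ.length + 1) = τ.take σ.length ++ [τ[σ.length]] := by
    rw [List.take_succ, List.getElem?_eq_getElem hlt]; rfl
  have h2 := List.take_prefix (σ.length + 1) τ
  rwa [h1, take_of_prefix h] at h2

private lemma getElem_of_snoc_prefix {σ τ : List Ω} {a : Ω} (h : σ ++ [a] <+: τ)
    (hlt : σ.length < τ.length) : τ[σ.length]'hlt = a := by
  obtain ⟨t, rfl⟩ := h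
  rw [List.getElem_append_left (by simp)]
  exact List.getElem_concat_length rfl _

/-- The `ℝ≥0∞`-valued version of `r`. -/
noncomputable def ρ (r : List Ω → ℝ) (σ : List Ω) : ℝ≥0∞ := ENNReal.ofReal (r σ)

lemma rho_ne_top (r : List Ω → ℝ) (σ : List Ω) : ρ r σ ≠ ⊤ := ENNReal.ofReal_ne_top

lemma rho_rec (r : List Ω → ℝ) (hr : MeasRep r) (σ : List Ω) :
    ρ r σ = ∑' a : Ω, ρ r (σ ++ [a]) := by
  have h := hr.2 σ
  have hn : ∀ a : Ω, 0 ≤ r (σ ++ [a]) := fun a => (hr.1 _).1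
  rw [ρ, ← h.tsum_eq, ENNReal.ofReal_tsum_of_nonneg hn h.summable]
  rfl

/-- Fundamental lemma, finite version: a finite prefix-free set of extensions of `σ`
has total mass at most `ρ σ`. -/
lemma fund_finset (r : List Ω → ℝ) (hr : MeasRep r) :
    ∀ (n : ℕ) (σ : List Ω) (S : Finset (List Ω)),
    (∀ τ ∈ S, σ <+: τ) → (∀ τ ∈ S, τ.length ≤ σ.length + n) →
    (∀ τ ∈ S, ∀ τ' ∈ S, τ <+: τ' → τ = τ') →
    ∑ τ ∈ S, ρ r τ ≤ ρ r σ := by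
  intro n
  induction n with
  | zero =>
    intro σ S hext hlen _
    have hsub : S ⊆ {σ} := by
      intro τ hτ
      have : σ = τ := (hext τ hτ).eq_of_length
        (Nat.le_antisymm (hext τ hτ).length_le (by simpa using hlen τ hτ))
      simp [← this]
    calc ∑ τ ∈ S, ρ r τ ≤ ∑ τ ∈ ({σ} : Finset (List Ω)), ρ r τ :=
          Finset.sum_le_sum_of_subset hsub
      _ = ρ r σ := Finset.sum_singleton _ _
  | succ n ih =>
    intro σ S hext hlen hpf
    classical
    by_cases hσS : σ ∈ S
    · have hsub : S ⊆ {σ} := by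
        intro τ hτ
        simpa using (hpf σ hσS τ hτ (hext τ hτ)).symm
      calc ∑ τ ∈ S, ρ r τ ≤ ∑ τ ∈ ({σ} : Finset (List Ω)), ρ r τ :=
            Finset.sum_le_sum_of_subset hsub
        _ = ρ r σ := Finset.sum_singleton _ _
    · have hproper : ∀ τ ∈ S, σ.length < τ.length := by
        intro τ hτ
        rcases Nat.lt_or_ge σ.length τ.length with h | h
        · exact h
        · have : σ = τ := (hext τ hτ).eq_of_length
            (Nat.le_antisymm (hext τ hτ).length_le h)
          exact absurd (this ▸ hτ) hσS
      set k : List Ω → List Ω := fun τ => τ.take (σ.length + 1) with hk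
      have hky : ∀ τ ∈ S, ∃ hlt : σ.length < τ.length, k τ = σ ++ [τ[σ.length]'hlt] := by
        intro τ hτ
        refine ⟨hproper τ hτ, ?_⟩
        have hs := snoc_prefix (hext τ hτ) (hproper τ hτ)
        have := take_of_prefix hs
        simpa [hk] using this
      rw [← Finset.sum_fiberwise_of_maps_to
        (fun τ hτ => Finset.mem_image_of_mem k hτ) (ρ r)]
      have step1 : ∀ y ∈ S.image k,
          ∑ τ ∈ S.filter (fun τ => k τ = y), ρ r τ ≤ ρ r y := by
        intro y hy
        obtain ⟨τ₀, hτ₀S, rfl⟩ := Finset.mem_image.mp hy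
        obtain ⟨hlt₀, hform₀⟩ := hky τ₀ hτ₀S
        have hylen : (k τ₀).length = σ.length + 1 := by
          rw [hform₀]; simp
        refine ih (k τ₀) (S.filter (fun τ => k τ = k τ₀)) ?_ ?_ ?_
        · intro τ hτ
          obtain ⟨hτS, hkτ⟩ := Finset.mem_filter.mp hτ
          rw [← hkτ, hk]
          exact List.take_prefix _ _
        · intro τ hτ
          obtain ⟨hτS, _⟩ := Finset.mem_filter.mp hτ
          rw [hylen]
          have := hlen τ hτS
          omega
        · intro τ hτ τ' hτ' hp
          exact hpf τ (Finset.mem_filter.mp hτ).1 τ' (Finset.mem_filter.mp hτ').1 hp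
      have hinj : Function.Injective (fun a : Ω => σ ++ [a]) := by
        intro a b hab
        simpa using hab
      have step2 : ∑ y ∈ S.image k, ρ r y ≤ ρ r σ := by
        have hrange : ∀ y ∈ S.image k, y ∈ Set.range (fun a : Ω => σ ++ [a]) := by
          intro y hy
          obtain ⟨τ₀, hτ₀S, rfl⟩ := Finset.mem_image.mp hy
          obtain ⟨hlt₀, hform₀⟩ := hky τ₀ hτ₀S
          exact ⟨τ₀[σ.length]'hlt₀, hform₀.symm⟩
        calc ∑ y ∈ S.image k, ρ r y
            = ∑ y ∈ S.image k, (Set.range (fun a : Ω => σ ++ [a])).indicator (ρ r) y :=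
              Finset.sum_congr rfl (fun y hy => (Set.indicator_of_mem (hrange y hy) _).symm)
          _ ≤ ∑' y : List Ω, (Set.range (fun a : Ω => σ ++ [a])).indicator (ρ r) y :=
              ENNReal.sum_le_tsum _
          _ = ∑' y : (Set.range (fun a : Ω => σ ++ [a])), ρ r ↑y := (tsum_subtype _ _).symm
          _ = ∑' a : Ω, ρ r (σ ++ [a]) := tsum_range _ hinj
          _ = ρ r σ := (rho_rec r hr σ).symm
      exact le_trans (Finset.sum_le_sum step1) step2

/-- Fundamental lemma: a prefix-free set of extensions of `σ` has total mass `≤ ρ σ`. -/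
lemma fund (r : List Ω → ℝ) (hr : MeasRep r) (σ : List Ω) (S : Set (List Ω))
    (hpf : ∀ τ ∈ S, ∀ τ' ∈ S, τ <+: τ' → τ = τ') (hext : ∀ τ ∈ S, σ <+: τ) :
    ∑' τ : S, ρ r ↑τ ≤ ρ r σ := by
  classical
  rw [ENNReal.tsum_eq_iSup_sum]
  refine iSup_le fun s => ?_
  have hsum : ∑ τ ∈ s.image (fun x : S => (x : List Ω)), ρ r τ = ∑ τ ∈ s, ρ r ↑τ :=
    Finset.sum_image (fun x _ y _ hxy => Subtype.ext hxy)
  rw [← hsum]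
  set S₀ := s.image (fun x : S => (x : List Ω)) with hS₀
  have hmem : ∀ τ ∈ S₀, τ ∈ S := by
    intro τ hτ
    obtain ⟨x, _, rfl⟩ := Finset.mem_image.mp hτ
    exact x.2
  refine fund_finset r hr (S₀.sup List.length) σ S₀ (fun τ hτ => hext τ (hmem τ hτ))
    (fun τ hτ => le_trans (Finset.le_sup hτ) (Nat.le_add_left _ _))
    (fun τ hτ τ' hτ' hp => hpf τ (hmem τ hτ) τ' (hmem τ' hτ') hp)

open Classical in
/-- The mass of `cyl F` relative to `σ`. -/
noncomputable def muF (r : List Ω → ℝ) (F : Set (List Ω)) (σ : List Ω) : ℝ≥0∞ :=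
  if ∃ τ ∈ F, τ <+: σ then ρ r σ else ∑' τ : {τ | τ ∈ F ∧ σ <+: τ}, ρ r ↑τ

lemma muF_le (r : List Ω → ℝ) (hr : MeasRep r) (F : Set (List Ω)) (hF : prefixFree F)
    (σ : List Ω) : muF r F σ ≤ ρ r σ := by
  rw [muF]
  split_ifs with h
  · exact le_refl _
  · exact fund r hr σ _ (fun τ hτ τ' hτ' hp => hF τ hτ.1 τ' hτ'.1 hp) (fun τ hτ => hτ.2)

lemma muF_rec (r : List Ω → ℝ) (hr : MeasRep r) (F : Set (List Ω)) (hF : prefixFree F)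
    (σ : List Ω) : muF r F σ = ∑' a : Ω, muF r F (σ ++ [a]) := by
  classical
  by_cases h1 : ∃ τ ∈ F, τ <+: σ
  · obtain ⟨τ₀, hτ₀F, hτ₀⟩ := h1
    rw [muF, if_pos ⟨τ₀, hτ₀F, hτ₀⟩, rho_rec r hr σ]
    refine tsum_congr fun a => ?_
    rw [muF, if_pos ⟨τ₀, hτ₀F, hτ₀.trans (List.prefix_append σ [a])⟩]
  · have hσF : σ ∉ F := fun hσ => h1 ⟨σ, hσ, List.prefix_refl σ⟩
    rw [muF, if_neg h1]
    have step2 : ∀ τ : List Ω, ({τ | τ ∈ F ∧ σ <+: τ} : Set (List Ω)).indicator (ρ r) τ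
        = ∑' a : Ω, ({τ' | τ' ∈ F ∧ σ ++ [a] <+: τ'} : Set (List Ω)).indicator (ρ r) τ := by
      intro τ
      by_cases hτT : τ ∈ ({τ | τ ∈ F ∧ σ <+: τ} : Set (List Ω))
      · obtain ⟨hτF, hστ⟩ := hτT
        have hne : σ ≠ τ := fun he => hσF (he ▸ hτF)
        have hlt : σ.length < τ.length := by
          rcases Nat.lt_or_ge σ.length τ.length with h | h
          · exact h
          · exact absurd (hστ.eq_of_length (Nat.le_antisymm hστ.length_le h)) hne
        rw [Set.indicator_of_mem (show τ ∈ ({τ | τ ∈ F ∧ σ <+: τ} : Set (List Ω)) from ⟨hτF, hστ⟩)]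
        rw [tsum_eq_single (τ[σ.length]'hlt) ?_]
        · rw [Set.indicator_of_mem (Set.mem_setOf.mpr ⟨hτF, snoc_prefix hστ hlt⟩)]
        · intro a ha
          apply Set.indicator_of_notMem
          rintro ⟨-, hpre⟩
          exact ha (getElem_of_snoc_prefix hpre hlt).symm
      · rw [Set.indicator_of_notMem hτT]
        symm
        rw [ENNReal.tsum_eq_zero]
        intro a
        apply Set.indicator_of_notMem
        rintro ⟨hτF, hpre⟩
        exact hτT ⟨hτF, (List.prefix_append σ [a]).trans hpre⟩
    have step4 : ∀ a : Ω,
        ∑' τ : List Ω, ({τ' | τ' ∈ F ∧ σ ++ [a] <+: τ'} : Set (List Ω)).indicator (ρ r) τ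
        = muF r F (σ ++ [a]) := by
      intro a
      rw [← tsum_subtype]
      by_cases hFa : σ ++ [a] ∈ F
      · rw [muF, if_pos ⟨σ ++ [a], hFa, List.prefix_refl _⟩]
        have hset : ({τ' | τ' ∈ F ∧ σ ++ [a] <+: τ'} : Set (List Ω)) = {σ ++ [a]} := by
          ext τ
          constructor
          · rintro ⟨hτF, hpre⟩
            exact (hF _ hFa _ hτF hpre).symm
          · rintro rfl
            exact ⟨hFa, List.prefix_refl _⟩
        rw [hset, tsum_singleton]
      · rw [muF, if_neg ?_]
        rintro ⟨τ, hτF, hpre⟩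
        rcases List.prefix_concat_iff.mp hpre with rfl | hpre'
        · exact hFa hτF
        · exact h1 ⟨τ, hτF, hpre'⟩
    calc ∑' τ : ({τ | τ ∈ F ∧ σ <+: τ} : Set (List Ω)), ρ r ↑τ
        = ∑' τ : List Ω, ({τ | τ ∈ F ∧ σ <+: τ} : Set (List Ω)).indicator (ρ r) τ :=
          tsum_subtype _ _
      _ = ∑' (τ : List Ω) (a : Ω),
            ({τ' | τ' ∈ F ∧ σ ++ [a] <+: τ'} : Set (List Ω)).indicator (ρ r) τ :=
          tsum_congr step2
      _ = ∑' (a : Ω) (τ : List Ω),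
            ({τ' | τ' ∈ F ∧ σ ++ [a] <+: τ'} : Set (List Ω)).indicator (ρ r) τ :=
          ENNReal.tsum_comm
      _ = ∑' a : Ω, muF r F (σ ++ [a]) := tsum_congr step4

lemma rho_le_muF [Nonempty Ω] (r : List Ω → ℝ) (hr : MeasRep r) (F : Set (List Ω))
    (hF : prefixFree F) (σ : List Ω)
    (hcov : ∀ α : ℕ → Ω, pre α σ.length = σ → ∃ n, pre α n ∈ F) :
    ρ r σ ≤ muF r F σ := by
  classical
  by_contra hcon
  push_neg at hcon
  set bad : List Ω → Prop := fun τ => muF r F τ < ρ r τ with hbad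
  have hchild : ∀ τ, bad τ → ∃ a, bad (τ ++ [a]) := by
    intro τ hτ
    by_contra hall
    push_neg at hall
    have hle : ρ r τ ≤ muF r F τ := by
      rw [rho_rec r hr τ, muF_rec r hr F hF τ]
      exact ENNReal.tsum_le_tsum fun a => not_lt.mp (hall a)
    exact absurd hle (not_le.mpr hτ)
  have hnoF : ∀ τ, bad τ → ¬ ∃ τ' ∈ F, τ' <+: τ := by
    intro τ hτ hex
    rw [hbad] at hτ
    simp only [muF, if_pos hex] at hτ
    exact lt_irrefl _ hτ
  set g : List Ω → List Ω := fun τ =>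
    τ ++ [if h : ∃ a, bad (τ ++ [a]) then h.choose else Classical.arbitrary Ω] with hg
  set s : ℕ → List Ω := fun n => g^[n] σ with hs
  have hs0 : s 0 = σ := rfl
  have hssucc : ∀ n, s (n + 1) = g (s n) := fun n => Function.iterate_succ_apply' g n σ
  have hbadn : ∀ n, bad (s n) := by
    intro n
    induction n with
    | zero => exact hcon
    | succ n ih =>
      rw [hssucc, hg]
      simp only
      rw [dif_pos (hchild _ ih)]
      exact (hchild _ ih).choose_spec
  have hlen : ∀ n, (s n).length = σ.length + n := by
    intro n
    induction n with
    | zero => rfl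
    | succ n ih =>
      rw [hssucc, hg]
      simp only [List.length_append, List.length_cons, List.length_nil, ih]
      omega
  have hpre1 : ∀ n, s n <+: s (n + 1) := by
    intro n
    rw [hssucc, hg]
    exact List.prefix_append _ _
  have hchain : ∀ m n, m ≤ n → s m <+: s n := by
    intro m n hmn
    induction n with
    | zero =>
      have : m = 0 := Nat.le_zero.mp hmn
      rw [this]
    | succ n ih =>
      rcases Nat.lt_or_ge m (n + 1) with h | h
      · exact (ih (Nat.lt_succ_iff.mp h)).trans (hpre1 n)
      · have : m = n + 1 := Nat.le_antisymm hmn h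
        rw [this]
  set α : ℕ → Ω := fun n => (s (n + 1)).getD n (Classical.arbitrary Ω) with hα
  have hpreα : ∀ n, pre α n = (s n).take n := by
    intro n
    induction n with
    | zero => simp [pre]
    | succ n ih =>
      have h1 : pre α (n + 1) = pre α n ++ [α n] := by
        rw [pre, List.ofFn_succ', List.concat_eq_append]
        simp [pre]
      have hn1 : n < (s (n + 1)).length := by rw [hlen]; omega
      have h2 : (s (n + 1)).take (n + 1) = (s (n + 1)).take n ++ [(s (n + 1))[n]] := by
        rw [List.take_succ, List.getElem?_eq_getElem hn1]; rfl
      have h3 : (s (n + 1)).take n = (s n).take n := by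
        rw [hssucc, hg]
        exact List.take_append_of_le_length (by rw [hlen]; omega)
      rw [h1, ih, h2, h3]
      congr 1
      rw [hα]
      simp only
      rw [List.getD_eq_getElem _ _ hn1]
  have hσα : pre α σ.length = σ := by
    rw [hpreα σ.length]
    have h := hchain 0 σ.length (Nat.zero_le _)
    rw [hs0] at h
    exact take_of_prefix h
  obtain ⟨n, hn⟩ := hcov α hσα
  refine hnoF (s n) (hbadn n) ⟨pre α n, hn, ?_⟩
  rw [hpreα n]
  exact List.take_prefix _ _

end Stmt2Aux

/-- If `E`, `F` are prefix-free and `[E]≺ ⊆ [F]≺`, then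
`∑_{σ ∈ E} r σ ≤ ∑_{σ ∈ F} r σ`. -/
theorem stmt2 {Ω : Type*} [Countable Ω] [Infinite Ω] (r : List Ω → ℝ)
    (hr : MeasRep r) (E F : Set (List Ω)) (hE : prefixFree E) (hF : prefixFree F)
    (h : cyl E ⊆ cyl F) :
    ∑' σ : E, r (σ : List Ω) ≤ ∑' σ : F, r (σ : List Ω) := by
  classical
  open Stmt2Aux in
  have hnn : ∀ σ, 0 ≤ r σ := fun σ => (hr.1 σ).1
  have hFbound : ∑' τ : F, Stmt2Aux.ρ r ↑τ ≤ Stmt2Aux.ρ r [] :=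
    Stmt2Aux.fund r hr [] F hF (fun τ _ => List.nil_prefix)
  have hEμ : ∀ σ ∈ E, Stmt2Aux.ρ r σ = Stmt2Aux.muF r F σ := by
    intro σ hσ
    refine le_antisymm (Stmt2Aux.rho_le_muF r hr F hF σ ?_) (Stmt2Aux.muF_le r hr F hF σ)
    intro α hα
    exact h ⟨σ.length, by rw [hα]; exact hσ⟩
  set g : List Ω → List Ω → ℝ≥0∞ := fun σ τ =>
    if σ ∈ E ∧ τ ∈ F then
      (if τ <+: σ then Stmt2Aux.ρ r σ else if σ <+: τ then Stmt2Aux.ρ r τ else 0)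
    else 0 with hg
  have hrow : ∀ σ ∈ E, ∑' τ : List Ω, g σ τ = Stmt2Aux.muF r F σ := by
    intro σ hσ
    by_cases h1 : ∃ τ₀ ∈ F, τ₀ <+: σ
    · obtain ⟨τ₀, hτ₀F, hτ₀p⟩ := h1
      rw [Stmt2Aux.muF, if_pos ⟨τ₀, hτ₀F, hτ₀p⟩, tsum_eq_single τ₀ ?_]
      · simp only [hg]
        rw [if_pos ⟨hσ, hτ₀F⟩, if_pos hτ₀p]
      · intro τ hτne
        simp only [hg]
        split_ifs with hc1 hc2 hc3
        · exfalso
          rcases Stmt2Aux.prefix_comparable hc2 hτ₀p with hcc | hcc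
          · exact hτne (hF τ hc1.2 τ₀ hτ₀F hcc)
          · exact hτne (hF τ₀ hτ₀F τ hc1.2 hcc).symm
        · exact absurd (hF τ₀ hτ₀F τ hc1.2 (hτ₀p.trans hc3)).symm hτne
        · rfl
        · rfl
    · rw [Stmt2Aux.muF, if_neg h1, tsum_subtype]
      refine tsum_congr fun τ => ?_
      by_cases hτm : τ ∈ ({τ | τ ∈ F ∧ σ <+: τ} : Set (List Ω))
      · rw [Set.indicator_of_mem hτm]
        obtain ⟨hτF, hστ⟩ := hτm
        simp only [hg]
        rw [if_pos ⟨hσ, hτF⟩, if_neg (fun hc => h1 ⟨τ, hτF, hc⟩), if_pos hστ]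
      · rw [Set.indicator_of_notMem hτm]
        simp only [hg]
        split_ifs with hc1 hc2 hc3
        · exact absurd ⟨τ, hc1.2, hc2⟩ h1
        · exact absurd (Set.mem_setOf.mpr ⟨hc1.2, hc3⟩) hτm
        · rfl
        · rfl
  have hcol : ∀ τ ∈ F, ∑' σ : List Ω, g σ τ ≤ Stmt2Aux.ρ r τ := by
    intro τ hτF
    by_cases hex : ∃ σ₀ ∈ E, σ₀ <+: τ ∧ σ₀ ≠ τ
    · obtain ⟨σ₀, hσ₀E, hσ₀p, hσ₀ne⟩ := hex
      rw [tsum_eq_single σ₀ ?_]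
      · simp only [hg]
        rw [if_pos ⟨hσ₀E, hτF⟩]
        split_ifs with hc2
        · rw [Stmt2Aux.prefix_antisymm hσ₀p hc2]
        · exact le_refl _
      · intro σ hne
        simp only [hg]
        split_ifs with hc1 hc2 hc3
        · exact absurd (hE σ₀ hσ₀E σ hc1.1 (hσ₀p.trans hc2)).symm hne
        · exfalso
          rcases Stmt2Aux.prefix_comparable hc3 hσ₀p with hcc | hcc
          · exact hne (hE σ hc1.1 σ₀ hσ₀E hcc)
          · exact hne (hE σ₀ hσ₀E σ hc1.1 hcc).symm
        · rfl
        · rfl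
    · have hpoint : ∀ σ : List Ω,
          g σ τ = ({σ | σ ∈ E ∧ τ <+: σ} : Set (List Ω)).indicator (Stmt2Aux.ρ r) σ := by
        intro σ
        simp only [hg]
        by_cases hσE : σ ∈ E
        · by_cases hτσ : τ <+: σ
          · rw [if_pos ⟨hσE, hτF⟩, if_pos hτσ,
              Set.indicator_of_mem (Set.mem_setOf.mpr ⟨hσE, hτσ⟩)]
          · rw [Set.indicator_of_notMem (fun hm => hτσ hm.2), if_pos ⟨hσE, hτF⟩,
              if_neg hτσ, if_neg ?_]
            intro hστ
            exact hex ⟨σ, hσE, hστ, fun he => hτσ (he ▸ List.prefix_refl _)⟩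
        · rw [if_neg (fun hc => hσE hc.1), Set.indicator_of_notMem (fun hm => hσE hm.1)]
      calc ∑' σ : List Ω, g σ τ
          = ∑' σ : List Ω, ({σ | σ ∈ E ∧ τ <+: σ} : Set (List Ω)).indicator (Stmt2Aux.ρ r) σ :=
            tsum_congr hpoint
        _ = ∑' σ : ({σ | σ ∈ E ∧ τ <+: σ} : Set (List Ω)), Stmt2Aux.ρ r ↑σ :=
            (tsum_subtype _ _).symm
        _ ≤ Stmt2Aux.ρ r τ := Stmt2Aux.fund r hr τ _
            (fun a ha b hb hp => hE a ha.1 b hb.1 hp) (fun a ha => ha.2)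
  have key : ∑' σ : E, Stmt2Aux.ρ r ↑σ ≤ ∑' τ : F, Stmt2Aux.ρ r ↑τ := by
    calc ∑' σ : E, Stmt2Aux.ρ r ↑σ
        = ∑' σ : E, ∑' τ : List Ω, g ↑σ τ :=
          tsum_congr fun σ => by rw [hEμ ↑σ σ.2, hrow ↑σ σ.2]
      _ = ∑' (σ : List Ω) (τ : List Ω), g σ τ := by
          refine tsum_subtype_eq_of_support_subset
            (f := fun σ => ∑' τ : List Ω, g σ τ) (s := E) ?_
          intro σ hσ
          by_contra hσE
          refine hσ ?_
          rw [ENNReal.tsum_eq_zero]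
          intro τ
          simp only [hg]
          rw [if_neg (fun hc => hσE hc.1)]
      _ = ∑' (τ : List Ω) (σ : List Ω), g σ τ := ENNReal.tsum_comm
      _ = ∑' τ : F, ∑' σ : List Ω, g σ ↑τ := by
          symm
          refine tsum_subtype_eq_of_support_subset
            (f := fun τ => ∑' σ : List Ω, g σ τ) (s := F) ?_
          intro τ hτ
          by_contra hτF
          refine hτ ?_
          rw [ENNReal.tsum_eq_zero]
          intro σ
          simp only [hg]
          rw [if_neg (fun hc => hτF hc.2)]
      _ ≤ ∑' τ : F, Stmt2Aux.ρ r ↑τ :=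
          ENNReal.tsum_le_tsum fun τ => hcol ↑τ τ.2
  have hFne : ∑' τ : F, Stmt2Aux.ρ r ↑τ ≠ ⊤ :=
    ne_top_of_le_ne_top ENNReal.ofReal_ne_top hFbound
  have hE' : ∑' σ : E, r (σ : List Ω) = (∑' σ : E, Stmt2Aux.ρ r ↑σ).toReal := by
    rw [ENNReal.tsum_toReal_eq (fun _ => Stmt2Aux.rho_ne_top r _)]
    exact tsum_congr fun σ => (ENNReal.toReal_ofReal (hnn _)).symm
  have hF' : ∑' σ : F, r (σ : List Ω) = (∑' τ : F, Stmt2Aux.ρ r ↑τ).toReal := by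
    rw [ENNReal.tsum_toReal_eq (fun _ => Stmt2Aux.rho_ne_top r _)]
    exact tsum_congr fun σ => (ENNReal.toReal_ofReal (hnn _)).symm
  rw [hE', hF']
  exact ENNReal.toReal_mono hFne key
end

section
/- Let Ω be a countably infinite set and r a measure representation over Ω. If E and E' are prefix-free subsets of Ω* generating the same open set, i.e., [E]≺ = [E']≺, then Σ_{σ∈E} r(σ) = Σ_{σ∈E'} r(σ). -/
open scoped ENNReal

open MeasureTheory
set_option linter.unusedSectionVars false

section Aux

variable {Ω : Type*} [Countable Ω] [Infinite Ω]

/-- Two prefixes of the same list agree via `getD`. -/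
lemma pref_getD {γ : Type*} {l l' : List γ} (h : l <+: l') {i : ℕ} (hi : i < l.length)
    (d : γ) : l.getD i d = l'.getD i d := by
  rw [List.getD_eq_getElem _ _ hi, List.getD_eq_getElem _ _ (hi.trans_le h.length_le)]
  exact h.getElem hi

lemma pre_take {γ : Type*} (α : ℕ → γ) {m k : ℕ} (h : m ≤ k) :
    pre α m = (pre α k).take m := by
  apply List.ext_getElem <;> simp [pre, Nat.lt_of_lt_of_le, h]

local instance : MeasurableSpace (List Ω) := ⊤

/-- The "measure" associated to a weight function on strings. -/
noncomputable def muW (R : List Ω → ℝ≥0∞) : Measure (List Ω) :=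
  Measure.sum fun σ => R σ • Measure.dirac σ

lemma muW_apply (R : List Ω → ℝ≥0∞) (S : Set (List Ω)) :
    muW R S = ∑' σ : S, R σ := by
  rw [muW, Measure.sum_apply _ MeasurableSpace.measurableSet_top, tsum_subtype]
  congr 1; ext σ
  rw [Measure.smul_apply, Measure.dirac_apply' _ MeasurableSpace.measurableSet_top]
  by_cases h : σ ∈ S <;> simp [Set.indicator, h]

/-- Finite Kraft inequality for prefix-free families of extensions of `τ`. -/
lemma kraft_fin (R : List Ω → ℝ≥0∞) (hR : ∀ τ, R τ = ∑' a : Ω, R (τ ++ [a])) :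
    ∀ (d : ℕ) (τ : List Ω) (F : Finset (List Ω)),
      (∀ σ ∈ F, τ <+: σ ∧ σ.length ≤ τ.length + d) →
      (∀ σ ∈ F, ∀ σ' ∈ F, σ <+: σ' → σ = σ') →
      ∑ σ ∈ F, R σ ≤ R τ := by
  classical
  intro d
  induction d with
  | zero =>
    intro τ F hF _
    have hsub : F ⊆ {τ} := by
      intro σ hσ
      obtain ⟨h1, h2⟩ := hF σ hσ
      simp only [Finset.mem_singleton]
      exact (h1.eq_of_length_le (by omega)).symm
    calc ∑ σ ∈ F, R σ ≤ ∑ σ ∈ ({τ} : Finset (List Ω)), R σ :=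
          Finset.sum_le_sum_of_subset hsub
      _ = R τ := by simp
  | succ d ih =>
    intro τ F hF hpf
    by_cases hτ : τ ∈ F
    · have hsub : F ⊆ {τ} := by
        intro σ hσ
        simp only [Finset.mem_singleton]
        exact (hpf τ hτ σ hσ (hF σ hσ).1).symm
      calc ∑ σ ∈ F, R σ ≤ ∑ σ ∈ ({τ} : Finset (List Ω)), R σ :=
            Finset.sum_le_sum_of_subset hsub
        _ = R τ := by simp
    · obtain ⟨a0⟩ : Nonempty Ω := inferInstance
      set nxt : List Ω → Ω := fun σ => σ.getD τ.length a0 with hnxt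
      have key : ∀ σ ∈ F, (τ ++ [nxt σ]) <+: σ := by
        intro σ hσ
        obtain ⟨⟨t, rfl⟩, _⟩ := hF σ hσ
        cases t with
        | nil => exact absurd (by simpa using hσ) hτ
        | cons b t' =>
          have hb : nxt (τ ++ b :: t') = b := by
            show (τ ++ b :: t').getD τ.length a0 = b
            rw [List.getD_eq_getElem _ _ (by simp)]
            rw [List.getElem_append_right (le_refl _)]
            simp
          rw [hb]
          exact ⟨t', by simp⟩
      calc ∑ σ ∈ F, R σ
          = ∑ a ∈ F.image nxt, ∑ σ ∈ F.filter (fun σ => nxt σ = a), R σ :=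
            (Finset.sum_fiberwise_of_maps_to (fun σ h => Finset.mem_image_of_mem _ h) _).symm
        _ ≤ ∑ a ∈ F.image nxt, R (τ ++ [a]) := by
            refine Finset.sum_le_sum fun a _ => ?_
            refine ih (τ ++ [a]) _ ?_ ?_
            · intro σ hσ
              rw [Finset.mem_filter] at hσ
              refine ⟨hσ.2 ▸ key σ hσ.1, ?_⟩
              have := (hF σ hσ.1).2
              simp only [List.length_append, List.length_singleton]
              omega
            · intro σ hσ σ' hσ'
              rw [Finset.mem_filter] at hσ hσ'
              exact hpf σ hσ.1 σ' hσ'.1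
        _ ≤ ∑' a : Ω, R (τ ++ [a]) := ENNReal.sum_le_tsum _
        _ = R τ := (hR τ).symm

/-- Kraft inequality: a prefix-free set of extensions of `τ` has mass at most `R τ`. -/
lemma kraft (R : List Ω → ℝ≥0∞) (hR : ∀ τ, R τ = ∑' a : Ω, R (τ ++ [a]))
    (S : Set (List Ω)) (hS : prefixFree S) (τ : List Ω) (hτ : ∀ σ ∈ S, τ <+: σ) :
    muW R S ≤ R τ := by
  classical
  rw [muW_apply]
  refine Summable.tsum_le_of_sum_le ENNReal.summable fun F => ?_
  have himg : ∑ σ ∈ F, R (σ : List Ω) = ∑ σ ∈ F.image (Subtype.val), R σ := by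
    rw [Finset.sum_image (fun x _ y _ h => Subtype.ext h)]
  rw [himg]
  refine kraft_fin R hR ((F.image (Subtype.val)).sup List.length) τ _ ?_ ?_
  · intro σ hσ
    simp only [Finset.mem_image] at hσ
    obtain ⟨⟨σ', hσ'⟩, hmem, rfl⟩ := hσ
    refine ⟨hτ σ' hσ', ?_⟩
    have h2 : List.length σ' ≤ (F.image (Subtype.val)).sup List.length :=
      Finset.le_sup (f := List.length) (Finset.mem_image_of_mem Subtype.val hmem)
    show σ'.length ≤ τ.length + _
    omega
  · intro σ hσ σ' hσ' hp
    simp only [Finset.mem_image] at hσ hσ'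
    obtain ⟨⟨σ1, h1⟩, _, rfl⟩ := hσ
    obtain ⟨⟨σ2, h2⟩, _, rfl⟩ := hσ'
    exact hS _ h1 _ h2 hp

/-- Partitioning the extensions of `τ` inside `S` by the next letter. -/
lemma muW_ext_split (R : List Ω → ℝ≥0∞) (S : Set (List Ω)) (τ : List Ω) (hτ : τ ∉ S) :
    muW R {σ ∈ S | τ <+: σ} = ∑' a : Ω, muW R {σ ∈ S | τ ++ [a] <+: σ} := by
  have hset : {σ ∈ S | τ <+: σ} = ⋃ a : Ω, {σ ∈ S | τ ++ [a] <+: σ} := by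
    ext σ
    simp only [Set.mem_setOf_eq, Set.mem_iUnion]
    constructor
    · rintro ⟨h1, t, rfl⟩
      cases t with
      | nil => exact absurd (by simpa using h1) hτ
      | cons b t' => exact ⟨b, h1, t', by simp⟩
    · rintro ⟨a, h1, h2⟩
      exact ⟨h1, (List.prefix_append τ [a]).trans h2⟩
  rw [hset]
  refine measure_iUnion ?_ fun _ => MeasurableSpace.measurableSet_top
  intro a b hab
  refine Set.disjoint_left.2 ?_
  rintro σ ⟨_, ha⟩ ⟨_, hb⟩
  rcases List.prefix_or_prefix_of_prefix ha hb with hp | hp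
  · have := hp.eq_of_length_le (by simp)
    apply hab
    simpa using this
  · have := hp.eq_of_length_le (by simp)
    apply hab
    simpa using this.symm

/-- If every sequence extending `τ` enters `S`, and no prefix of `τ` is in `S`,
then the extensions of `τ` in `S` carry full mass `R τ`. -/
lemma full_mass (R : List Ω → ℝ≥0∞) (hR : ∀ τ, R τ = ∑' a : Ω, R (τ ++ [a]))
    (S : Set (List Ω)) (hS : prefixFree S) (τ : List Ω)
    (hcov : ∀ α : ℕ → Ω, pre α τ.length = τ → α ∈ cyl S)
    (hnp : ∀ ρ, ρ <+: τ → ρ ∉ S) :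
    muW R {σ ∈ S | τ <+: σ} = R τ := by
  classical
  obtain ⟨a0⟩ : Nonempty Ω := inferInstance
  -- the easy (Kraft) inequality, for an arbitrary string
  have hle : ∀ τ' : List Ω, muW R {σ ∈ S | τ' <+: σ} ≤ R τ' := by
    intro τ'
    refine kraft R hR _ ?_ τ' fun σ hσ => hσ.2
    intro σ hσ σ' hσ' hp
    exact hS σ hσ.1 σ' hσ'.1 hp
  -- the "bad" predicate: strict mass deficiency with no prefix in S
  set Bad : List Ω → Prop := fun τ' =>
    muW R {σ ∈ S | τ' <+: σ} < R τ' ∧ ∀ ρ, ρ <+: τ' → ρ ∉ S with hBad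
  have step : ∀ l, Bad l → ∃ a, Bad (l ++ [a]) := by
    intro l hl
    by_contra hno
    push_neg at hno
    have hlS : l ∉ S := hl.2 l (List.prefix_refl l)
    have hall : ∀ a : Ω, muW R {σ ∈ S | l ++ [a] <+: σ} = R (l ++ [a]) := by
      intro a
      refine le_antisymm (hle _) (not_lt.1 fun hlt => ?_)
      have hnp' : ∀ ρ, ρ <+: l ++ [a] → ρ ∉ S := by
        intro ρ hρ hρS
        rcases List.prefix_concat_iff.1 hρ with rfl | hρ'
        · -- ρ = l ++ [a] ∈ S: then the set contains it, so mass ≥ R (l ++ [a])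
          have hmem : l ++ [a] ∈ {σ ∈ S | l ++ [a] <+: σ} := ⟨hρS, List.prefix_refl _⟩
          have hge : R (l ++ [a]) ≤ muW R {σ ∈ S | l ++ [a] <+: σ} := by
            rw [muW_apply]
            exact ENNReal.le_tsum (⟨_, hmem⟩ : {σ ∈ S | l ++ [a] <+: σ})
          exact absurd hge (not_le.2 hlt)
        · exact hl.2 ρ hρ' hρS
      exact absurd ⟨hlt, hnp'⟩ (hno a)
    have : muW R {σ ∈ S | l <+: σ} = R l := by
      rw [muW_ext_split R S l hlS, hR l]
      exact tsum_congr hall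
    exact absurd this (ne_of_lt hl.1)
  -- by contradiction, assume strict deficiency at τ, and diagonalize
  refine le_antisymm (hle τ) (not_lt.1 fun hlt => ?_)
  have hbadτ : Bad τ := ⟨hlt, hnp⟩
  let G : ℕ → {l : List Ω // Bad l} := fun n =>
    Nat.rec ⟨τ, hbadτ⟩
      (fun _ p => ⟨p.1 ++ [Classical.choose (step p.1 p.2)],
        Classical.choose_spec (step p.1 p.2)⟩) n
  have hG0 : (G 0).1 = τ := rfl
  have hGsucc : ∀ n, ∃ a : Ω, (G (n + 1)).1 = (G n).1 ++ [a] := fun n =>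
    ⟨Classical.choose (step (G n).1 (G n).2), rfl⟩
  have hlen : ∀ n, (G n).1.length = τ.length + n := by
    intro n
    induction n with
    | zero => simp [hG0]
    | succ n ihn =>
      obtain ⟨a, ha⟩ := hGsucc n
      rw [ha]
      simp [ihn]; omega
  have hmono : ∀ m n, m ≤ n → (G m).1 <+: (G n).1 := by
    intro m n hmn
    induction n, hmn using Nat.le_induction with
    | base => exact List.prefix_refl _
    | succ n hmn ihn =>
      obtain ⟨a, ha⟩ := hGsucc n
      rw [ha]
      exact ihn.trans (List.prefix_append _ _)
  set α : ℕ → Ω := fun i => (G (i + 1)).1.getD i a0 with hα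
  have hagree : ∀ n i, i < (G n).1.length → (G n).1.getD i a0 = α i := by
    intro n i hi
    have h1 : (G n).1 <+: (G (max n (i + 1))).1 := hmono _ _ (le_max_left _ _)
    have h2 : (G (i + 1)).1 <+: (G (max n (i + 1))).1 := hmono (i + 1) (max n (i + 1)) (le_max_right n (i + 1))
    have hi2 : i < (G (i + 1)).1.length := by have := hlen (i + 1); omega
    rw [pref_getD h1 hi a0, hα]
    simp only
    rw [pref_getD h2 hi2 a0]
  have hpreG : ∀ n, pre α ((G n).1.length) = (G n).1 := by
    intro n
    apply List.ext_getElem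
    · simp [pre]
    · intro i hi1 hi2
      simp only [pre, List.getElem_ofFn]
      rw [← hagree n i hi2, List.getD_eq_getElem _ _ hi2]
  have hcyl : α ∈ cyl S := by
    apply hcov
    have := hpreG 0
    rwa [hG0] at this
  obtain ⟨m, hm⟩ := hcyl
  have hmle : m ≤ (G m).1.length := by have := hlen m; omega
  have hpm : pre α m <+: (G m).1 := by
    rw [pre_take α hmle, hpreG m]
    exact List.take_prefix _ _
  exact (G m).2.2 (pre α m) hpm hm

/-- Monotonicity: if `cyl E ⊆ cyl E'` then the mass of `E` is at most that of `E'`. -/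
lemma muW_mono (R : List Ω → ℝ≥0∞) (hR : ∀ τ, R τ = ∑' a : Ω, R (τ ++ [a]))
    (E E' : Set (List Ω)) (hE : prefixFree E) (hE' : prefixFree E')
    (h : cyl E ⊆ cyl E') : muW R E ≤ muW R E' := by
  classical
  set E1 : Set (List Ω) := {σ ∈ E | ∃ ρ ∈ E', ρ <+: σ} with hE1def
  set E2 : Set (List Ω) := E \ E1 with hE2def
  set B : Set (List Ω) := {ρ ∈ E' | ∃ σ ∈ E1, ρ <+: σ} with hBdef
  set U : Set (List Ω) := ⋃ σ : E2, {σ' ∈ E' | (σ : List Ω) <+: σ'} with hUdef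
  have hE1sub : E1 ⊆ E := fun σ hσ => hσ.1
  have hE2sub : E2 ⊆ E := fun σ hσ => hσ.1
  -- split E
  have hsplit : muW R E = muW R E1 + muW R E2 := by
    rw [← measure_union (Set.disjoint_sdiff_right) MeasurableSpace.measurableSet_top]
    congr 1
    rw [Set.union_diff_cancel hE1sub]
  -- E1 part
  have h1 : muW R E1 ≤ muW R B := by
    have hcover : E1 = ⋃ ρ : B, {σ ∈ E1 | (ρ : List Ω) <+: σ} := by
      ext σ
      simp only [Set.mem_iUnion, Set.mem_setOf_eq]
      constructor
      · intro hσ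
        obtain ⟨hσE, ρ, hρ1, hρ2⟩ := hσ
        exact ⟨⟨ρ, ⟨hρ1, σ, ⟨hσE, ρ, hρ1, hρ2⟩, hρ2⟩⟩, ⟨hσE, ρ, hρ1, hρ2⟩, hρ2⟩
      · rintro ⟨_, hσ, _⟩
        exact hσ
    have hdisj : Pairwise (Function.onFun Disjoint fun ρ : B => {σ ∈ E1 | (ρ : List Ω) <+: σ}) := by
      intro ρ1 ρ2 hne
      refine Set.disjoint_left.2 ?_
      rintro σ ⟨hσ1, hp1⟩ ⟨_, hp2⟩
      apply hne
      rcases List.prefix_or_prefix_of_prefix hp1 hp2 with hp | hp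
      · exact Subtype.ext (hE' _ ρ1.2.1 _ ρ2.2.1 hp)
      · exact Subtype.ext (hE' _ ρ2.2.1 _ ρ1.2.1 hp).symm
    rw [hcover, measure_iUnion hdisj fun _ => MeasurableSpace.measurableSet_top,
      muW_apply R B]
    refine ENNReal.tsum_le_tsum fun ρ => ?_
    refine kraft R hR _ ?_ ρ fun σ hσ => hσ.2
    intro σ hσ σ' hσ' hp
    exact hE σ (hE1sub hσ.1) σ' (hE1sub hσ'.1) hp
  -- E2 part
  have h2 : muW R E2 = muW R U := by
    have hcov : ∀ σ : E2, muW R {σ' ∈ E' | (σ : List Ω) <+: σ'} = R (σ : List Ω) := by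
      rintro ⟨σ, hσ⟩
      refine full_mass R hR E' hE' σ ?_ ?_
      · intro α hα
        exact h ⟨σ.length, by rw [hα]; exact hE2sub hσ⟩
      · intro ρ hρ hρS
        exact hσ.2 ⟨hσ.1, ρ, hρS, hρ⟩
    have hdisj : Pairwise (Function.onFun Disjoint fun σ : E2 => {σ' ∈ E' | (σ : List Ω) <+: σ'}) := by
      intro σ1 σ2 hne
      refine Set.disjoint_left.2 ?_
      rintro ρ ⟨_, hp1⟩ ⟨_, hp2⟩
      apply hne
      rcases List.prefix_or_prefix_of_prefix hp1 hp2 with hp | hp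
      · exact Subtype.ext (hE _ (hE2sub σ1.2) _ (hE2sub σ2.2) hp)
      · exact Subtype.ext (hE _ (hE2sub σ2.2) _ (hE2sub σ1.2) hp).symm
    rw [hUdef, measure_iUnion hdisj fun _ => MeasurableSpace.measurableSet_top,
      muW_apply R E2]
    exact tsum_congr fun σ => (hcov σ).symm
  -- B and U are disjoint subsets of E'
  have hBsub : B ⊆ E' := fun ρ hρ => hρ.1
  have hUsub : U ⊆ E' := by
    rw [hUdef]
    refine Set.iUnion_subset fun σ => fun ρ hρ => hρ.1
  have hBU : Disjoint B U := by
    refine Set.disjoint_left.2 ?_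
    rintro ρ ⟨_, σ1, hσ1, hρσ1⟩ hρU
    rw [hUdef] at hρU
    obtain ⟨σ2, hρ2⟩ := Set.mem_iUnion.1 hρU
    obtain ⟨_, hσ2ρ⟩ := hρ2
    -- σ2 <+: ρ <+: σ1, both in E
    have hσ2σ1 : (σ2 : List Ω) <+: σ1 := hσ2ρ.trans hρσ1
    have heq : (σ2 : List Ω) = σ1 := hE _ (hE2sub σ2.2) _ (hE1sub hσ1) hσ2σ1
    have : σ1 ∈ E2 := heq ▸ σ2.2
    exact this.2 hσ1
  calc muW R E = muW R E1 + muW R E2 := hsplit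
    _ ≤ muW R B + muW R U := add_le_add h1 h2.le
    _ = muW R (B ∪ U) :=
        (measure_union hBU MeasurableSpace.measurableSet_top).symm
    _ ≤ muW R E' := measure_mono (Set.union_subset hBsub hUsub)

end Aux

/-- If `E`, `E'` are prefix-free and generate the same open set,
then `∑_{σ ∈ E} r σ = ∑_{σ ∈ E'} r σ`. -/
theorem stmt3 {Ω : Type*} [Countable Ω] [Infinite Ω] (r : List Ω → ℝ)
    (hr : MeasRep r) (E E' : Set (List Ω)) (hE : prefixFree E) (hE' : prefixFree E')
    (h : cyl E = cyl E') :
    ∑' σ : E, r (σ : List Ω) = ∑' σ : E', r (σ : List Ω) := by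
  classical
  set R : List Ω → ℝ≥0∞ := fun σ => ENNReal.ofReal (r σ) with hRdef
  have hR : ∀ τ : List Ω, R τ = ∑' a : Ω, R (τ ++ [a]) := by
    intro τ
    have hs := hr.2 τ
    rw [hRdef]
    simp only
    rw [← hs.tsum_eq, ENNReal.ofReal_tsum_of_nonneg (fun a => (hr.1 _).1) hs.summable]
  have key : muW R E = muW R E' :=
    le_antisymm (muW_mono R hR E E' hE hE' h.le) (muW_mono R hR E' E hE' hE h.ge)
  have conv : ∀ S : Set (List Ω), ∑' σ : S, r (σ : List Ω) = (muW R S).toReal := by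
    intro S
    rw [muW_apply, ENNReal.tsum_toReal_eq fun _ => ENNReal.ofReal_ne_top]
    exact tsum_congr fun σ => (ENNReal.toReal_ofReal (hr.1 _).1).symm
  rw [conv E, conv E', key]
end

section
/- Let Ω be a countably infinite set and r a measure representation over Ω. For the outer measure μ_r induced by r, every Borel subset of Ω^∞ is μ_r-measurable (Carathéodory measurable); in particular, every basic open cylinder [σ]≺ is μ_r-measurable. -/
open scoped ENNReal

/-- The outer measure induced by a measure representation `r`:
`μ_r C` is the infimum of `r(A)` over open sets `A ⊇ C`, where every open set is
generated by a prefix-free set. -/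
noncomputable def muR {Ω : Type*} (r : List Ω → ℝ) (C : Set (ℕ → Ω)) : ℝ≥0∞ :=
  ⨅ (E : Set (List Ω)) (_ : prefixFree E) (_ : C ⊆ cyl E),
    ∑' σ : E, ENNReal.ofReal (r (σ : List Ω))

/-- The Borel σ-field on `Ω^∞`, generated by the open sets `[S]≺`. -/
def borelSeq (Ω : Type*) : MeasurableSpace (ℕ → Ω) :=
  MeasurableSpace.generateFrom {A | ∃ S : Set (List Ω), A = cyl S}


open MeasureTheory

section prelim
variable {Γ : Type*}

@[simp] lemma pre_length (α : ℕ → Γ) (n : ℕ) : (pre α n).length = n := by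
  simp [pre]

lemma pre_getElem (α : ℕ → Γ) (n : ℕ) (i : ℕ) (h : i < (pre α n).length) :
    (pre α n)[i] = α i := by
  simp [pre]

lemma pre_prefix (α : ℕ → Γ) {m n : ℕ} (h : m ≤ n) : pre α m <+: pre α n := by
  refine (List.prefix_iff_eq_take).2 ?_
  apply List.ext_getElem (by simp [h])
  intro i h1 h2
  simp [pre_getElem, List.getElem_take]

lemma eq_pre_of_prefix {α : ℕ → Γ} {n : ℕ} {τ : List Γ} (h : τ <+: pre α n) :
    τ = pre α τ.length ∧ τ.length ≤ n := by
  have hlen : τ.length ≤ n := by simpa using h.length_le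
  refine ⟨?_, hlen⟩
  apply List.ext_getElem (by simp)
  intro i h1 h2
  rw [pre_getElem]
  have hi : i < τ.length := by simpa using h1
  rw [List.IsPrefix.getElem h hi, pre_getElem]

lemma mem_cyl_singleton {α : ℕ → Γ} {σ : List Γ} :
    α ∈ cyl {σ} ↔ pre α σ.length = σ := by
  constructor
  · rintro ⟨n, hn⟩
    simp only [Set.mem_singleton_iff] at hn
    subst hn; simp
  · intro h; exact ⟨σ.length, by simp [h]⟩

lemma cyl_mono {S T : Set (List Γ)} (h : S ⊆ T) : cyl S ⊆ cyl T :=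
  fun _ ⟨n, hn⟩ => ⟨n, h hn⟩

/-- minimal elements of `S`. -/
def minEl (S : Set (List Γ)) : Set (List Γ) :=
  {σ ∈ S | ∀ τ ∈ S, τ <+: σ → τ = σ}

lemma minEl_subset (S : Set (List Γ)) : minEl S ⊆ S := fun _ h => h.1

lemma prefixFree_minEl (S : Set (List Γ)) : prefixFree (minEl S) :=
  fun σ hσ τ hτ hp => hτ.2 σ hσ.1 hp

lemma cyl_minEl (S : Set (List Γ)) : cyl (minEl S) = cyl S := by
  apply Set.Subset.antisymm (cyl_mono (minEl_subset S))
  rintro α ⟨n, hn⟩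
  classical
  have hex : ∃ m, pre α m ∈ S := ⟨n, hn⟩
  refine ⟨Nat.find hex, Nat.find_spec hex, ?_⟩
  intro τ hτ hp
  obtain ⟨h1, h2⟩ := eq_pre_of_prefix hp
  rcases eq_or_lt_of_le h2 with h | h
  · rw [h1, h]
  · exact absurd (h1 ▸ hτ) (Nat.find_min hex h)

lemma cyl_eq_iUnion (S : Set (List Γ)) :
    cyl S = ⋃ σ : minEl S, cyl {(σ : List Γ)} := by
  rw [← cyl_minEl]
  ext α
  constructor
  · rintro ⟨n, hn⟩
    exact Set.mem_iUnion.2 ⟨⟨pre α n, hn⟩, ⟨n, rfl⟩⟩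
  · intro h
    obtain ⟨σ, hσ⟩ := Set.mem_iUnion.1 h
    obtain ⟨n, hn⟩ := hσ
    simp only [Set.mem_singleton_iff] at hn
    exact ⟨n, hn ▸ σ.2⟩

lemma cyl_singleton_nonempty [Nonempty Γ] (σ : List Γ) : (cyl {σ} : Set (ℕ → Γ)).Nonempty := by
  classical
  inhabit Γ
  refine ⟨fun i => if h : i < σ.length then σ[i] else default, ?_⟩
  rw [mem_cyl_singleton]
  apply List.ext_getElem (by simp)
  intro i h1 h2
  rw [pre_getElem]
  simp [h2]

lemma cyl_singleton_injective [Infinite Γ] : Function.Injective (fun σ : List Γ => cyl {σ}) := by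
  classical
  have key : ∀ σ τ : List Γ, cyl {σ} = cyl {τ} → σ <+: τ → σ = τ := by
    intro σ τ hc hp
    by_contra hne
    have hlt : σ.length < τ.length := lt_of_le_of_ne hp.length_le
      (fun h => hne ((List.prefix_iff_eq_take.1 hp).trans (by rw [h, List.take_length])))
    obtain ⟨b, hb⟩ := exists_ne (τ[σ.length])
    set α : ℕ → Γ := fun i => if h : i < σ.length then σ[i] else b with hα
    have hmem : α ∈ cyl {σ} := by
      rw [mem_cyl_singleton]
      apply List.ext_getElem (by simp)
      intro i h1 h2
      rw [pre_getElem]; simp [hα, h2]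
    rw [hc, mem_cyl_singleton] at hmem
    have hpre : τ <+: pre α τ.length := by rw [hmem]
    have h4 : τ[σ.length] = α σ.length := by
      rw [List.IsPrefix.getElem hpre hlt, pre_getElem]
    rw [hα] at h4
    simp at h4
    exact hb h4.symm
  intro σ τ hc
  simp only at hc
  -- σ and τ are comparable
  have hσ : ∃ α, α ∈ cyl ({σ} : Set (List Γ)) := by
    have := cyl_singleton_nonempty (Γ := Γ) σ
    exact this.imp (fun _ h => h)
  obtain ⟨α, hα⟩ := hσ
  have hατ : α ∈ cyl {τ} := hc ▸ hα
  rw [mem_cyl_singleton] at hα hατ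
  rcases le_total σ.length τ.length with h | h
  · exact key σ τ hc (by rw [← hα, ← hατ]; exact pre_prefix α h)
  · exact (key τ σ hc.symm (by rw [← hα, ← hατ]; exact pre_prefix α h)).symm

end prelim

section sums
variable {Ω : Type*} [Countable Ω] {r : List Ω → ℝ}

/-- Equiv between lists of length `k+1` and pairs. -/
def consEquiv (Ω : Type*) (k : ℕ) : Ω × {l : List Ω // l.length = k} ≃ {l : List Ω // l.length = k + 1} where
  toFun p := ⟨p.1 :: p.2.1, by simp [p.2.2]⟩
  invFun l := (l.1.head (List.ne_nil_of_length_pos (by simp [l.2])),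
    ⟨l.1.tail, by simp [l.2]⟩)
  left_inv p := by simp
  right_inv l := by
    apply Subtype.ext
    simp [List.cons_head_tail]

lemma sum_ext (hr : MeasRep r) (k : ℕ) (τ : List Ω) :
    ∑' ρ : {l : List Ω // l.length = k}, ENNReal.ofReal (r (τ ++ ρ.1)) = ENNReal.ofReal (r τ) := by
  induction k generalizing τ with
  | zero =>
    rw [tsum_eq_single ⟨[], rfl⟩]
    · simp
    · rintro ⟨l, hl⟩ hne
      exact absurd (Subtype.ext (List.length_eq_zero_iff.1 hl)) hne
  | succ k ih =>
    rw [← Equiv.tsum_eq (consEquiv Ω k)]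
    have : ∀ p : Ω × {l : List Ω // l.length = k},
        ENNReal.ofReal (r (τ ++ ((consEquiv Ω k) p).1)) =
        ENNReal.ofReal (r ((τ ++ [p.1]) ++ p.2.1)) := by
      intro p
      simp [consEquiv]
    rw [tsum_congr this,
      ENNReal.tsum_prod (f := fun (a : Ω) (l : {l : List Ω // l.length = k}) =>
        ENNReal.ofReal (r ((τ ++ [a]) ++ l.1)))]
    calc ∑' (a : Ω) (l : {l : List Ω // l.length = k}), ENNReal.ofReal (r ((τ ++ [a]) ++ l.1))
        = ∑' (a : Ω), ENNReal.ofReal (r (τ ++ [a])) := by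
          exact tsum_congr fun a => ih (τ ++ [a])
      _ = ENNReal.ofReal (r τ) := by
          rw [← ENNReal.ofReal_tsum_of_nonneg (fun a => (hr.1 _).1) (hr.2 τ).summable,
            (hr.2 τ).tsum_eq]
end sums

section om
variable {Ω : Type*} [Countable Ω] [Infinite Ω] (r : List Ω → ℝ) {C : Set (ℕ → Ω)}

lemma muR_le {E : Set (List Ω)} (h1 : prefixFree E) (h2 : C ⊆ cyl E) :
    muR r C ≤ ∑' σ : E, ENNReal.ofReal (r (σ : List Ω)) :=
  iInf_le_of_le E (iInf_le_of_le h1 (iInf_le _ h2))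

lemma le_muR {x : ℝ≥0∞}
    (h : ∀ E : Set (List Ω), prefixFree E → C ⊆ cyl E →
      x ≤ ∑' σ : E, ENNReal.ofReal (r (σ : List Ω))) : x ≤ muR r C :=
  le_iInf fun E => le_iInf fun h1 => le_iInf fun h2 => h E h1 h2

-- the set function on basic cylinders
open Classical in
noncomputable def mFun (r : List Ω → ℝ) : Set (ℕ → Ω) → ℝ≥0∞ := fun A =>
  if A = ∅ then 0 else ⨅ (σ : List Ω) (_ : A = cyl {σ}), ENNReal.ofReal (r σ)

lemma mFun_empty : mFun r ∅ = 0 := by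
  simp [mFun]

lemma mFun_cyl (σ : List Ω) : mFun r (cyl {σ}) = ENNReal.ofReal (r σ) := by
  simp only [mFun]
  rw [if_neg (cyl_singleton_nonempty σ).ne_empty]
  refine le_antisymm (iInf_le_of_le σ (iInf_le _ rfl)) (le_iInf₂ fun τ h => ?_)
  rw [cyl_singleton_injective h.symm]

lemma mFun_shape {A : Set (ℕ → Ω)} (h : mFun r A ≠ ⊤) :
    A = ∅ ∨ ∃ σ : List Ω, A = cyl {σ} := by
  by_contra hcon
  push_neg at hcon
  apply h
  simp only [mFun]
  rw [if_neg (Set.nonempty_iff_ne_empty.1 hcon.1)]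
  exact iInf_eq_top.2 fun σ => iInf_eq_top.2 fun hA => absurd hA (hcon.2 σ)

/-- the bundled outer measure -/
noncomputable def nuR (r : List Ω → ℝ) : OuterMeasure (ℕ → Ω) :=
  OuterMeasure.ofFunction (mFun r) (mFun_empty r)

lemma muR_eq_nuR (C : Set (ℕ → Ω)) : muR r C = nuR r C := by
  apply le_antisymm
  · -- muR ≤ nuR
    rw [nuR, OuterMeasure.ofFunction_apply]
    refine le_iInf fun t => le_iInf fun hcov => ?_
    by_cases htop : ∃ n, mFun r (t n) = ⊤
    · obtain ⟨n, hn⟩ := htop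
      have htop2 : (∑' n, mFun r (t n)) = ⊤ := top_unique (hn ▸ ENNReal.le_tsum n)
      rw [htop2]; exact le_top
    push_neg at htop
    set S : Set (List Ω) := {σ | ∃ n, t n = cyl {σ}} with hS
    have hCS : C ⊆ cyl S := by
      intro α hα
      obtain ⟨n, hn⟩ := Set.mem_iUnion.1 (hcov hα)
      rcases mFun_shape r (htop n) with h | ⟨σ, h⟩
      · rw [h] at hn; exact absurd hn (Set.notMem_empty α)
      · rw [h] at hn
        obtain ⟨m, hm⟩ := hn
        exact ⟨m, by rw [Set.mem_singleton_iff] at hm; exact hm ▸ ⟨n, h⟩⟩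
    refine (muR_le r (prefixFree_minEl S) (by rw [cyl_minEl]; exact hCS)).trans ?_
    refine (ENNReal.tsum_mono_subtype (fun l => ENNReal.ofReal (r l)) (minEl_subset S)).trans ?_
    have hEx : ∀ σ : S, ∃ n, t n = cyl {(σ : List Ω)} := fun σ => σ.2
    choose j hj using hEx
    refine ENNReal.summable.tsum_le_tsum_of_inj j ?_ (fun _ _ => zero_le) (fun σ => ?_)
      ENNReal.summable
    · intro σ τ h
      apply Subtype.ext
      apply cyl_singleton_injective
      simp only
      rw [← hj σ, ← hj τ, h]
    · rw [hj σ, mFun_cyl]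
  · -- nuR ≤ muR
    refine le_muR r fun E hpf hcov => ?_
    obtain ⟨e, he⟩ := exists_injective_nat E
    set t : ℕ → Set (ℕ → Ω) := fun n => ⋃ (σ : E) (_ : e σ = n), cyl {(σ : List Ω)} with ht
    have hte : ∀ σ : E, t (e σ) = cyl {(σ : List Ω)} := by
      intro σ
      apply Set.Subset.antisymm
      · exact Set.iUnion₂_subset fun τ h => by rw [he h]
      · intro x hx; exact Set.mem_iUnion₂.2 ⟨σ, rfl, hx⟩
    have hcov2 : C ⊆ ⋃ n, t n := by
      intro α hα
      obtain ⟨n, hn⟩ := hcov hα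
      refine Set.mem_iUnion.2 ⟨e ⟨pre α n, hn⟩, ?_⟩
      rw [hte ⟨pre α n, hn⟩]
      exact ⟨n, rfl⟩
    calc nuR r C ≤ ∑' n, mFun r (t n) := by
          rw [nuR, OuterMeasure.ofFunction_apply]
          exact iInf₂_le t hcov2
      _ = ∑' σ : E, mFun r (t (e σ)) := by
          refine (Function.Injective.tsum_eq he (f := fun n => mFun r (t n)) ?_).symm
          intro n hn
          simp only [Function.mem_support] at hn
          rcases Set.eq_empty_or_nonempty (t n) with h | h
          · rw [h, mFun_empty] at hn; exact absurd rfl hn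
          · obtain ⟨α, hα⟩ := h
            obtain ⟨σ, hσ⟩ := Set.mem_iUnion.1 hα
            obtain ⟨hen, -⟩ := Set.mem_iUnion.1 hσ
            exact ⟨σ, hen⟩
      _ = ∑' σ : E, ENNReal.ofReal (r (σ : List Ω)) := by
          exact tsum_congr fun σ => by rw [hte σ, mFun_cyl]
end om

section carath
variable {Ω : Type*} [Countable Ω] [Infinite Ω] {r : List Ω → ℝ}

lemma carath_le (hr : MeasRep r) (σ : List Ω) (C : Set (ℕ → Ω)) :
    muR r (C ∩ cyl {σ}) + muR r (C \ cyl {σ}) ≤ muR r C := by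
  classical
  refine le_muR r fun E hE hcov => ?_
  set Eout : Set (List Ω) := {τ ∈ E | ¬ σ <+: τ} with hEoutdef
  have hEoutpf : prefixFree Eout := fun a ha b hb hp => hE a ha.1 b hb.1 hp
  have houtcov : C \ cyl {σ} ⊆ cyl Eout := by
    rintro α ⟨hC, hn⟩
    obtain ⟨n, hn'⟩ := hcov hC
    refine ⟨n, hn', fun hp => hn ?_⟩
    rw [mem_cyl_singleton]
    exact (eq_pre_of_prefix hp).1.symm
  have houtle : ∑' τ : Eout, ENNReal.ofReal (r τ) ≤ ∑' τ : E, ENNReal.ofReal (r τ) :=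
    ENNReal.tsum_mono_subtype (fun τ => ENNReal.ofReal (r τ)) (fun τ (h : τ ∈ Eout) => h.1)
  by_cases hB : ∃ τ₀ ∈ E, τ₀ <+: σ ∧ τ₀ ≠ σ
  · obtain ⟨τ₀, hτ₀E, hτ₀p, hτ₀ne⟩ := hB
    have hτ₀out : τ₀ ∈ Eout :=
      ⟨hτ₀E, fun hcon => hτ₀ne (hτ₀p.eq_of_length (le_antisymm hτ₀p.length_le hcon.length_le))⟩
    set k := σ.length - τ₀.length with hk
    set ρ₀ := σ.drop τ₀.length with hρ₀
    have hσeq : τ₀ ++ ρ₀ = σ := List.prefix_iff_eq_append.1 hτ₀p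
    have hρ₀len : ρ₀.length = k := by simp [hρ₀, hk]
    set Din : Set (List Ω) := (fun ρ => τ₀ ++ ρ) '' {ρ | ρ.length = k ∧ ρ ≠ ρ₀} with hDin
    set F := (Eout \ {τ₀}) ∪ Din with hF
    have hFpf : prefixFree F := by
      rintro a ha b hb hp
      rcases ha with ⟨hao, hane⟩ | ⟨ρa, hρa, rfl⟩ <;> rcases hb with ⟨hbo, hbne⟩ | ⟨ρb, hρb, rfl⟩
      · exact hE a hao.1 b hbo.1 hp
      · have hτb : τ₀ <+: τ₀ ++ ρb := List.prefix_append τ₀ ρb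
        rcases List.prefix_or_prefix_of_prefix hp hτb with h | h
        · exact absurd (hE a hao.1 τ₀ hτ₀E h) hane
        · exact absurd (hE τ₀ hτ₀E a hao.1 h).symm hane
      · have hτa : τ₀ <+: τ₀ ++ ρa := List.prefix_append τ₀ ρa
        exact absurd (hE τ₀ hτ₀E b hbo.1 (hτa.trans hp)) (Ne.symm hbne)
      · refine hp.eq_of_length ?_
        simp [hρa.1, hρb.1]
    have hFcov : C \ cyl {σ} ⊆ cyl F := by
      rintro α ⟨hC, hn⟩
      obtain ⟨n, hnE⟩ := hcov hC
      have hout : pre α n ∈ Eout := by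
        refine ⟨hnE, fun hp => hn ?_⟩
        rw [mem_cyl_singleton]
        exact (eq_pre_of_prefix hp).1.symm
      by_cases hne : pre α n = τ₀
      · have hlen : n = τ₀.length := by rw [← pre_length α n, hne]
        have hnm : n ≤ σ.length := hlen ▸ hτ₀p.length_le
        obtain ⟨ρ, hρ⟩ := pre_prefix α hnm
        have hρlen : ρ.length = k := by
          have := congrArg List.length hρ
          simp only [List.length_append, pre_length] at this
          omega
        refine ⟨σ.length, Or.inr ⟨ρ, ⟨hρlen, ?_⟩, ?_⟩⟩
        · intro hcon
          apply hn
          rw [mem_cyl_singleton, ← hρ, hne, hcon, hσeq]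
        · rw [← hne]; exact hρ
      · exact ⟨n, Or.inl ⟨hout, hne⟩⟩
    have h1 : muR r (C ∩ cyl {σ}) ≤ ENNReal.ofReal (r σ) := by
      refine (muR_le r (E := {σ}) ?_ Set.inter_subset_right).trans_eq
        (tsum_singleton σ fun τ => ENNReal.ofReal (r τ))
      intro a ha b hb _
      rw [Set.mem_singleton_iff] at ha hb
      rw [ha, hb]
    have h2 : muR r (C \ cyl {σ}) ≤ ∑' τ : F, ENNReal.ofReal (r τ) := muR_le r hFpf hFcov
    have h3 : (∑' τ : F, ENNReal.ofReal (r τ)) ≤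
        (∑' τ : ↑(Eout \ {τ₀}), ENNReal.ofReal (r τ)) + ∑' τ : Din, ENNReal.ofReal (r τ) :=
      by rw [hF]; exact ENNReal.tsum_union_le (fun τ => ENNReal.ofReal (r τ)) _ _
    have h4 : (∑' τ : Din, ENNReal.ofReal (r τ)) ≤
        ∑' x : {l : List Ω // l.length = k},
          (if x.1 = ρ₀ then 0 else ENNReal.ofReal (r (τ₀ ++ x.1))) := by
      rw [hDin]
      refine le_trans (le_of_eq (tsum_image (g := fun ρ => τ₀ ++ ρ)
        (fun l => ENNReal.ofReal (r l)) (fun x _ y _ hxy => List.append_cancel_left hxy))) ?_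
      refine ENNReal.summable.tsum_le_tsum_of_inj (fun ρ => (⟨ρ.1, ρ.2.1⟩ : {l : List Ω // l.length = k}))
        (fun a b hab => by
          apply Subtype.ext
          simpa using congrArg Subtype.val hab)
        (fun _ _ => zero_le) (fun ρ => ?_) ENNReal.summable
      simp only [if_neg ρ.2.2, le_refl]
    have h5 : ENNReal.ofReal (r σ) +
        (∑' x : {l : List Ω // l.length = k},
          (if x.1 = ρ₀ then 0 else ENNReal.ofReal (r (τ₀ ++ x.1)))) = ENNReal.ofReal (r τ₀) := by
      have hse := sum_ext hr k τ₀
      rw [ENNReal.tsum_eq_add_tsum_ite (⟨ρ₀, hρ₀len⟩ : {l : List Ω // l.length = k})] at hse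
      rw [hσeq] at hse
      rw [← hse]
      congr 1
      refine tsum_congr fun x => ?_
      by_cases hx : x.1 = ρ₀
      · rw [if_pos hx, if_pos (Subtype.ext hx)]
      · rw [if_neg hx, if_neg (fun h => hx (congrArg Subtype.val h))]
    have h6 : (∑' τ : ↑(Eout \ {τ₀}), ENNReal.ofReal (r τ)) + ENNReal.ofReal (r τ₀) =
        ∑' τ : Eout, ENNReal.ofReal (r τ) := by
      have hun : (Eout \ {τ₀}) ∪ {τ₀} = Eout :=
        Set.diff_union_of_subset (Set.singleton_subset_iff.2 hτ₀out)
      have htu := ENNReal.summable.tsum_union_disjoint (f := fun τ => ENNReal.ofReal (r τ))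
        (s := Eout \ {τ₀}) (t := {τ₀}) Set.disjoint_sdiff_left ENNReal.summable
      rw [hun, tsum_singleton τ₀ (fun τ => ENNReal.ofReal (r τ))] at htu
      exact htu.symm
    calc muR r (C ∩ cyl {σ}) + muR r (C \ cyl {σ})
        ≤ ENNReal.ofReal (r σ) + ((∑' τ : ↑(Eout \ {τ₀}), ENNReal.ofReal (r τ)) +
            ∑' x : {l : List Ω // l.length = k},
              (if x.1 = ρ₀ then 0 else ENNReal.ofReal (r (τ₀ ++ x.1)))) :=
          add_le_add h1 (h2.trans (h3.trans (add_le_add_right h4 _)))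
      _ = (∑' τ : ↑(Eout \ {τ₀}), ENNReal.ofReal (r τ)) + ENNReal.ofReal (r τ₀) := by
          rw [← h5]; ring
      _ = ∑' τ : Eout, ENNReal.ofReal (r τ) := h6
      _ ≤ _ := houtle
  · push_neg at hB
    set Ein : Set (List Ω) := {τ ∈ E | σ <+: τ} with hEin
    have hEinpf : prefixFree Ein := fun a ha b hb hp => hE a ha.1 b hb.1 hp
    have hincov : C ∩ cyl {σ} ⊆ cyl Ein := by
      rintro α ⟨hC, hσm⟩
      rw [mem_cyl_singleton] at hσm
      obtain ⟨n, hnE⟩ := hcov hC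
      rcases le_total n σ.length with h | h
      · have hp : pre α n <+: σ := hσm ▸ pre_prefix α h
        have heq := hB (pre α n) hnE hp
        exact ⟨n, hnE, heq ▸ List.prefix_rfl⟩
      · have hp : σ <+: pre α n := hσm ▸ pre_prefix α h
        exact ⟨n, hnE, hp⟩
    have hsum : (∑' τ : Ein, ENNReal.ofReal (r τ)) + (∑' τ : Eout, ENNReal.ofReal (r τ)) =
        ∑' τ : E, ENNReal.ofReal (r τ) := by
      have hun : Ein ∪ Eout = E := by
        ext τ
        simp only [hEin, hEoutdef, Set.mem_union, Set.mem_setOf_eq, Set.mem_sep_iff]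
        tauto
      have hdis : Disjoint Ein Eout := by
        rw [Set.disjoint_left]
        rintro τ ⟨-, h1⟩ ⟨-, h2⟩
        exact h2 h1
      rw [← hun, ENNReal.summable.tsum_union_disjoint (f := fun τ => ENNReal.ofReal (r τ))
        hdis ENNReal.summable]
    calc muR r (C ∩ cyl {σ}) + muR r (C \ cyl {σ})
        ≤ (∑' τ : Ein, ENNReal.ofReal (r τ)) + (∑' τ : Eout, ENNReal.ofReal (r τ)) :=
          add_le_add (muR_le r hEinpf hincov) (muR_le r hEoutpf houtcov)
      _ = _ := hsum
end carath

/-- Every Borel subset of `Ω^∞` is Carathéodory `μ_r`-measurable;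
in particular so is every basic open cylinder `[σ]≺`. -/
theorem stmt5 {Ω : Type*} [Countable Ω] [Infinite Ω] (r : List Ω → ℝ)
    (hr : MeasRep r) :
    (∀ G : Set (ℕ → Ω), @MeasurableSet _ (borelSeq Ω) G →
      ∀ C : Set (ℕ → Ω), muR r (C ∩ G) + muR r (C \ G) = muR r C) ∧
    (∀ σ : List Ω, ∀ C : Set (ℕ → Ω),
      muR r (C ∩ cyl {σ}) + muR r (C \ cyl {σ}) = muR r C) := by

  have key : ∀ S : Set (List Ω), MeasurableSet[(nuR r).caratheodory] (cyl S) := by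
    intro S
    rw [cyl_eq_iUnion]
    refine MeasurableSet.iUnion fun σ => ((nuR r).isCaratheodory_iff).2 fun t => ?_
    refine le_antisymm ?_ ?_
    · conv_lhs => rw [← Set.inter_union_diff t (cyl {(σ : List Ω)})]
      exact measure_union_le _ _
    · rw [← muR_eq_nuR, ← muR_eq_nuR, ← muR_eq_nuR]
      exact carath_le hr _ _
  have hgen : borelSeq Ω ≤ (nuR r).caratheodory :=
    MeasurableSpace.generateFrom_le (by rintro A ⟨S, rfl⟩; exact key S)
  have main : ∀ G : Set (ℕ → Ω), @MeasurableSet _ (borelSeq Ω) G →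
      ∀ C : Set (ℕ → Ω), muR r (C ∩ G) + muR r (C \ G) = muR r C := by
    intro G hG C
    have hmeas : MeasurableSet[(nuR r).caratheodory] G := hgen G hG
    have heq := ((nuR r).isCaratheodory_iff).1 hmeas C
    rw [muR_eq_nuR, muR_eq_nuR, muR_eq_nuR]
    exact heq.symm
  refine ⟨main, fun σ C => ?_⟩
  exact main (cyl {σ}) (MeasurableSpace.measurableSet_generateFrom ⟨{σ}, rfl⟩) C
end

section
/- Let Ω be an r.e. infinite set, P a discrete probability space on Ω, and A₁,…,A_L pairwise disjoint r.e. subsets of Ω covering Ω. Let Θ = {a₁,…,a_L} be a finite alphabet of distinct symbols, and define Q ∈ 𝕡(Θ) by Q(aᵢ) := P(Aᵢ). If α is Martin-Löf P-random and β is obtained from α by replacing each occurrence of an element of Aᵢ with aᵢ, then β is Martin-Löf Q-random. -/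
open scoped ENNReal

/-- The (generalized) Bernoulli probability of a finite string:
`P(σ₁)···P(σₙ)`. -/
def strP {Γ : Type*} (P : Γ → ℝ) (σ : List Γ) : ℝ := (σ.map P).prod

/-- The `λ_P`-measure of the open set generated by a prefix-free set `S`. -/
noncomputable def mOpen {Γ : Type*} (P : Γ → ℝ) (S : Set (List Γ)) : ℝ≥0∞ :=
  ∑' σ : S, ENNReal.ofReal (strP P (σ : List Γ))

/-- All symbols of the string belong to the alphabet `O`. -/
def strIn {Γ : Type*} (O : Set Γ) (σ : List Γ) : Prop := ∀ a ∈ σ, a ∈ O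

/-- All symbols of the sequence belong to the alphabet `O`. -/
def seqIn {Γ : Type*} (O : Set Γ) (α : ℕ → Γ) : Prop := ∀ n, α n ∈ O

/-- `P` is a discrete probability space on the alphabet `O`. -/
def isProb {Γ : Type*} (O : Set Γ) (P : Γ → ℝ) : Prop :=
  (∀ a ∈ O, 0 ≤ P a) ∧ HasSum (fun a : O => P (a : Γ)) 1

/-- The combinatorial conditions on a Martin-Löf `P`-test: sections consist of strings
over the alphabet, are prefix-free, and have `λ_P`-measure `< 2⁻ⁿ`. -/
def isTestSet {Γ : Type*} (O : Set Γ) (P : Γ → ℝ) (C : Set (ℕ × List Γ)) : Prop :=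
  (∀ x ∈ C, strIn O x.2) ∧
  ∀ n : ℕ, 1 ≤ n → prefixFree {σ | (n, σ) ∈ C} ∧
    mOpen P {σ | (n, σ) ∈ C} < (2 : ℝ≥0∞)⁻¹ ^ n

/-- A Martin-Löf `P`-test: an r.e. subset of `ℕ⁺ × Ω*` satisfying the test conditions. -/
def MLTest {Γ : Type*} [Primcodable Γ] (O : Set Γ) (P : Γ → ℝ)
    (C : Set (ℕ × List Γ)) : Prop :=
  REPred (· ∈ C) ∧ isTestSet O P C

/-- `α` is Martin-Löf `P`-random: it passes every Martin-Löf `P`-test. -/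
def MLRandom {Γ : Type*} [Primcodable Γ] (O : Set Γ) (P : Γ → ℝ) (α : ℕ → Γ) : Prop :=
  ∀ C : Set (ℕ × List Γ), MLTest O P C → ∃ n, 1 ≤ n ∧ α ∉ cyl {σ | (n, σ) ∈ C}

namespace StmtAux

open Encodable
open Nat.Partrec (Code)
open Nat.Partrec.Code

lemma rePred_of_dom {α} [Primcodable α] {f : α →. Unit} (hf : Partrec f)
    {p : α → Prop} (h : ∀ a, (f a).Dom ↔ p a) : REPred p :=
  (Partrec.dom_re hf).of_eq h

lemma assert_dom {p : Prop} : (Part.assert p fun _ => Part.some ()).Dom ↔ p := by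
  simp [Part.assert, Part.Dom]

lemma re_of_sigma {γ : Type*} [Primcodable γ] {g : γ → ℕ → Bool} (hg : Computable₂ g) :
    REPred fun x => ∃ n, g x n = true := by
  have hfun : Partrec fun x : γ =>
      Nat.rfindOpt fun n => bif g x n then Option.some () else Option.none :=
    Partrec.rfindOpt (Computable.cond hg (Computable.const _) (Computable.const _))
  refine rePred_of_dom hfun fun a => ?_
  rw [Nat.rfindOpt_dom]
  constructor
  · rintro ⟨n, u, hu⟩
    refine ⟨n, ?_⟩
    revert hu; cases hgn : g a n <;> simp [hgn]
  · rintro ⟨n, hn⟩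
    exact ⟨n, (), by simp [hn]⟩

lemma exists_code_re {δ : Type*} [Primcodable δ] {r : δ → Prop} (h : REPred r) :
    ∃ c : Code, ∀ x : δ, r x ↔ ∃ k, (evaln k c (encode x)).isSome := by
  obtain ⟨c, hc⟩ := exists_code.1 h
  refine ⟨c, fun x => ?_⟩
  have hx : eval c (encode x) = (Part.assert (r x) fun _ => Part.some ()).map encode := by
    rw [hc]; simp [encodek]
  have hdom : r x ↔ (eval c (encode x)).Dom := by
    rw [hx]; exact assert_dom.symm
  rw [hdom]
  constructor
  · intro hd
    obtain ⟨k, hk⟩ := evaln_complete.1 (Part.get_mem hd)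
    exact ⟨k, by simp [Option.isSome_iff_exists]; exact ⟨_, hk⟩⟩
  · rintro ⟨k, hk⟩
    obtain ⟨y, hy⟩ := Option.isSome_iff_exists.1 hk
    exact Part.dom_iff_mem.2 ⟨y, evaln_sound hy⟩

lemma RePred.and' {α : Type*} [Primcodable α] {p q : α → Prop} (hp : REPred p) (hq : REPred q) :
    REPred fun a => p a ∧ q a := by
  have hfun : Partrec fun a => (Part.assert (p a) fun _ => Part.some ()).bind
      fun _ => Part.assert (q a) fun _ => Part.some () :=
    hp.bind ((hq.comp Computable.fst) : _)
  refine rePred_of_dom hfun fun a => ?_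
  simp [Part.dom_iff_mem, Part.mem_assert_iff, Part.mem_bind_iff]

lemma RePred.or' {α : Type*} [Primcodable α] {p q : α → Prop} (hp : REPred p) (hq : REPred q) :
    REPred fun a => p a ∨ q a := by
  obtain ⟨k, pk, hk⟩ := Partrec.merge' hp hq
  refine rePred_of_dom pk fun a => ?_
  rw [(hk a).2]
  simp [assert_dom]

lemma RePred.false' {α : Type*} [Primcodable α] : REPred fun _ : α => False := by
  refine rePred_of_dom (f := fun _ => Part.none) Partrec.none fun a => by simp


lemma evaln_isSome_mono {c : Code} {m k k' : ℕ} (hk : k ≤ k')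
    (h : (evaln k c m).isSome) : (evaln k' c m).isSome := by
  obtain ⟨y, hy⟩ := Option.isSome_iff_exists.1 h
  exact Option.isSome_iff_exists.2 ⟨y, evaln_mono hk hy⟩

lemma RePred.proj {α β : Type*} [Primcodable α] [Primcodable β] {R : α × β → Prop}
    (h : REPred R) : REPred fun a => ∃ b, R (a, b) := by
  obtain ⟨c, hc⟩ := exists_code_re h
  have hg : Computable₂ fun (a : α) (n : ℕ) =>
      (Option.casesOn (decode (α := β) n.unpair.2) false
        (fun b => (evaln n.unpair.1 c (encode (a, b))).isSome) : Bool) := by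
    have hdec : Computable fun p : α × ℕ => (decode (α := β) p.2.unpair.2 : Option β) :=
      Computable.decode.comp ((Primrec.snd.comp (Primrec.unpair.comp Primrec.snd)).to_comp)
    have hinner : Primrec fun p : (α × ℕ) × β =>
        (evaln p.1.2.unpair.1 c (encode (p.1.1, p.2))).isSome :=
      Primrec.option_isSome.comp <| primrec_evaln.comp <|
        ((Primrec.fst.comp (Primrec.unpair.comp (Primrec.snd.comp Primrec.fst))).pair
          (Primrec.const c)).pair
          (Primrec.encode.comp ((Primrec.fst.comp Primrec.fst).pair Primrec.snd))
    exact Computable.option_casesOn hdec (Computable.const false) hinner.to_comp.to₂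
  refine (re_of_sigma hg).of_eq fun a => ?_
  constructor
  · rintro ⟨n, hn⟩
    revert hn
    cases hd : (decode (α := β) n.unpair.2 : Option β) with
    | none => simp
    | some b =>
      intro hn
      simp only at hn
      exact ⟨b, (hc (a, b)).2 ⟨n.unpair.1, by simpa [hd] using hn⟩⟩
  · rintro ⟨b, hb⟩
    obtain ⟨k, hk⟩ := (hc (a, b)).1 hb
    refine ⟨Nat.pair k (encode b), ?_⟩
    simpa [Nat.unpair_pair, encodek] using hk

lemma RePred.listAll {γ : Type*} [Primcodable γ] {r : γ → Prop} (h : REPred r) :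
    REPred fun l : List γ => ∀ x ∈ l, r x := by
  obtain ⟨c, hc⟩ := exists_code_re h
  have hg : Computable₂ fun (l : List γ) (s : ℕ) =>
      l.all fun x => (evaln s c (encode x)).isSome := by
    have heq : ∀ p : List γ × ℕ, (p.1.all fun x => (evaln p.2 c (encode x)).isSome)
        = p.1.foldr (fun x b => ((evaln p.2 c (encode x)).isSome && b)) true := by
      rintro ⟨l, s⟩
      induction l with
      | nil => rfl
      | cons a l ih => simp_all [List.all_cons]
    have : Primrec fun p : List γ × ℕ =>
        p.1.foldr (fun x b => ((evaln p.2 c (encode x)).isSome && b)) true := by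
      refine Primrec.list_foldr (h := fun (p : List γ × ℕ) (q : γ × Bool) =>
          ((evaln p.2 c (encode q.1)).isSome && q.2)) Primrec.fst (Primrec.const true) ?_
      show Primrec fun x : (List γ × ℕ) × γ × Bool =>
        ((evaln x.1.2 c (encode x.2.1)).isSome && x.2.2)
      have harg : Primrec fun x : (List γ × ℕ) × γ × Bool =>
          ((x.1.2, c), encode x.2.1) :=
        ((Primrec.snd.comp Primrec.fst).pair (Primrec.const c)).pair
          (Primrec.encode.comp (Primrec.fst.comp Primrec.snd))
      have hb : Primrec fun x : (List γ × ℕ) × γ × Bool =>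
          (evaln x.1.2 c (encode x.2.1)).isSome :=
        Primrec.option_isSome.comp (primrec_evaln.comp harg)
      exact (Primrec.cond hb (Primrec.snd.comp Primrec.snd) (Primrec.const false)).of_eq
        fun x => by cases h' : (evaln x.1.2 c (encode x.2.1)).isSome <;> simp [h']
    exact ((this.of_eq fun p => (heq p).symm).to_comp : _)
  refine (re_of_sigma hg).of_eq fun l => ?_
  constructor
  · rintro ⟨s, hs⟩
    intro x hx
    rw [List.all_eq_true] at hs
    exact (hc x).2 ⟨s, hs x hx⟩
  · intro hl
    induction l with
    | nil => exact ⟨0, rfl⟩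
    | cons a l ih =>
      obtain ⟨s, hs⟩ := ih fun x hx => hl x (List.mem_cons_of_mem _ hx)
      obtain ⟨k, hk⟩ := (hc a).1 (hl a (List.mem_cons_self))
      refine ⟨max k s, ?_⟩
      rw [List.all_eq_true] at hs ⊢
      intro x hx
      rcases List.mem_cons.1 hx with rfl | hx
      · exact evaln_isSome_mono (le_max_left _ _) hk
      · exact evaln_isSome_mono (le_max_right _ _) (hs x hx)


lemma RePred.comp' {α β : Type*} [Primcodable α] [Primcodable β] {p : β → Prop} {f : α → β}
    (hp : REPred p) (hf : Computable f) : REPred fun a => p (f a) :=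
  Partrec.comp hp hf

lemma re_fintype_exists {α ι : Type*} [Primcodable α] [Fintype ι] [DecidableEq ι]
    {r : ι → α → Prop} (h : ∀ i, REPred (r i)) : REPred fun a => ∃ i, r i a := by
  have key : ∀ s : Finset ι, REPred fun a => ∃ i ∈ s, r i a := by
    intro s
    induction s using Finset.induction_on with
    | empty => exact RePred.false'.of_eq (by simp)
    | @insert j t hj ih =>
      refine (RePred.or' (h j) ih).of_eq fun a => ?_
      constructor
      · rintro (h' | ⟨i, hi, h'⟩)
        · exact ⟨j, Finset.mem_insert_self _ _, h'⟩
        · exact ⟨i, Finset.mem_insert_of_mem hi, h'⟩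
      · rintro ⟨i, hi, h'⟩
        rcases Finset.mem_insert.1 hi with rfl | hi
        · exact Or.inl h'
        · exact Or.inr ⟨i, hi, h'⟩
  exact (key Finset.univ).of_eq fun a => by simp

lemma re_memA {L : ℕ} (A : Fin L → Set ℕ) (hA : ∀ i, REPred (· ∈ A i)) :
    REPred fun p : ℕ × Fin L => p.1 ∈ A p.2 := by
  have h1 : ∀ i : Fin L, REPred fun p : ℕ × Fin L => p.2 = i ∧ p.1 ∈ A i := by
    intro i
    refine RePred.and' ?_ (RePred.comp' (hA i) Computable.fst)
    apply ComputablePred.to_re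
    rw [ComputablePred.computable_iff]
    refine ⟨fun p => decide (p.2 = i),
      (PrimrecPred.decide (Primrec.eq.comp Primrec.snd (Primrec.const i))).to_comp, ?_⟩
    funext p; simp
  exact (re_fintype_exists h1).of_eq fun p =>
    ⟨fun ⟨i, h, hp⟩ => h ▸ hp, fun hp => ⟨p.2, rfl, hp⟩⟩

lemma zip_eq_map_range {L : ℕ} [Inhabited (Fin L)] (σ : List ℕ) (τ : List (Fin L))
    (hlen : σ.length = τ.length) :
    σ.zip τ = (List.range σ.length).map
      (fun i => (σ.getD i 0, τ.getD i default)) := by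
  apply List.ext_getElem
  · simp [hlen]
  · intro i h1 h2
    have hs : i < σ.length := by
      simpa [List.length_zip, hlen, min_self] using h1
    have ht : i < τ.length := hlen ▸ hs
    simp [List.getElem_zip, List.getElem_map, List.getElem_range, hs, ht,
      List.getElem?_eq_getElem]

lemma re_D {L : ℕ} (hL : 0 < L) (A : Fin L → Set ℕ) (hA : ∀ i, REPred (· ∈ A i))
    (C : Set (ℕ × List (Fin L))) (hC : REPred (· ∈ C)) :
    REPred fun x : ℕ × List ℕ => ∃ τ : List (Fin L),
      (x.1, τ) ∈ C ∧ x.2.length = τ.length ∧ ∀ p ∈ x.2.zip τ, p.1 ∈ A p.2 := by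
  haveI : Inhabited (Fin L) := ⟨⟨0, hL⟩⟩
  have c1 : REPred fun y : (ℕ × List ℕ) × List (Fin L) => (y.1.1, y.2) ∈ C :=
    RePred.comp' hC ((Computable.fst.comp Computable.fst).pair Computable.snd)
  have c2 : REPred fun y : (ℕ × List ℕ) × List (Fin L) => y.1.2.length = y.2.length := by
    apply ComputablePred.to_re
    rw [ComputablePred.computable_iff]
    refine ⟨fun y => decide (y.1.2.length = y.2.length),
      (PrimrecPred.decide (Primrec.eq.comp (Primrec.list_length.comp (Primrec.snd.comp Primrec.fst))
        (Primrec.list_length.comp Primrec.snd))).to_comp, ?_⟩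
    funext y; simp
  have hJ : Computable fun y : (ℕ × List ℕ) × List (Fin L) =>
      (List.range y.1.2.length).map fun i => (y.1.2.getD i 0, y.2.getD i default) := by
    have hg : Primrec fun q : ((ℕ × List ℕ) × List (Fin L)) × ℕ =>
        (q.1.1.2.getD q.2 0, q.1.2.getD q.2 (default : Fin L)) :=
      ((Primrec.list_getD 0).comp (Primrec.snd.comp (Primrec.fst.comp Primrec.fst))
        Primrec.snd).pair
        ((Primrec.list_getD default).comp (Primrec.snd.comp Primrec.fst) Primrec.snd)
    exact (Primrec.list_map
      (Primrec.list_range.comp (Primrec.list_length.comp (Primrec.snd.comp Primrec.fst)))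
      hg.to₂).to_comp
  have c3 : REPred fun y : (ℕ × List ℕ) × List (Fin L) =>
      ∀ p ∈ (List.range y.1.2.length).map (fun i => (y.1.2.getD i 0, y.2.getD i default)),
        p.1 ∈ A p.2 :=
    RePred.comp' (RePred.listAll (re_memA A hA)) hJ
  refine (RePred.proj (RePred.and' c1 (RePred.and' c2 c3))).of_eq fun x => ?_
  constructor
  · rintro ⟨τ, h1, h2, h3⟩
    exact ⟨τ, h1, h2, by rw [zip_eq_map_range x.2 τ h2]; exact h3⟩
  · rintro ⟨τ, h1, h2, h3⟩
    exact ⟨τ, h1, h2, by rw [← zip_eq_map_range x.2 τ h2]; exact h3⟩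



/-- match-style cons splitter equiv -/
def consEquiv (P1 : ℕ → Prop) (P2 : List ℕ → Prop) :
    {σ : List ℕ // match σ with | [] => False | a :: l => P1 a ∧ P2 l}
      ≃ {a // P1 a} × {l // P2 l} where
  toFun := fun x => match x with
    | ⟨a :: l, h⟩ => (⟨a, h.1⟩, ⟨l, h.2⟩)
  invFun := fun x => ⟨x.1.1 :: x.2.1, ⟨x.1.2, x.2.2⟩⟩
  left_inv := fun x => by
    obtain ⟨σ, h⟩ := x
    cases σ with
    | nil => exact absurd h id
    | cons a l => rfl
  right_inv := fun x => rfl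

variable {L : ℕ} (A : Fin L → Set ℕ) (P : ℕ → ℝ) (Q : Fin L → ℝ)

/-- the box (preimage) condition -/
def boxC (τ : List (Fin L)) (σ : List ℕ) : Prop :=
  σ.length = τ.length ∧ ∀ p ∈ σ.zip τ, p.1 ∈ A p.2

lemma ofReal_tsum_A (hpos : ∀ i, ∀ a ∈ A i, 0 ≤ P a)
    (hQ : ∀ i, HasSum (fun a : A i => P (a : ℕ)) (Q i)) (i : Fin L) :
    ∑' a : A i, ENNReal.ofReal (P (a : ℕ)) = ENNReal.ofReal (Q i) := by
  rw [← (hQ i).tsum_eq, ENNReal.ofReal_tsum_of_nonneg (f := fun a : A i => P (a : ℕ))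
    (fun a => hpos i a a.2) (hQ i).summable]

lemma boxC_cons_iff (j : Fin L) (τ : List (Fin L)) (σ : List ℕ) :
    boxC A (j :: τ) σ ↔
      (match σ with | [] => False | a :: l => a ∈ A j ∧ boxC A τ l) := by
  cases σ with
  | nil => simp [boxC]
  | cons a l =>
    simp only [boxC, List.zip_cons_cons, List.forall_mem_cons, List.length_cons,
      Nat.add_right_cancel_iff]
    tauto

def boxConsEquiv (j : Fin L) (τ : List (Fin L)) :
    {σ : List ℕ // boxC A (j :: τ) σ} ≃ {a // a ∈ A j} × {l // boxC A τ l} :=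
  (Equiv.subtypeEquivRight (boxC_cons_iff A j τ)).trans (consEquiv (· ∈ A j) (boxC A τ))

lemma box_tsum (hpos : ∀ i, ∀ a ∈ A i, 0 ≤ P a)
    (hQ : ∀ i, HasSum (fun a : A i => P (a : ℕ)) (Q i)) (τ : List (Fin L)) :
    ∑' σ : {σ : List ℕ // boxC A τ σ}, ENNReal.ofReal (strP P (σ : List ℕ))
      = ENNReal.ofReal (strP Q τ) := by
  induction τ with
  | nil =>
    rw [tsum_eq_single (⟨[], by constructor <;> simp [boxC]⟩ : {σ : List ℕ // boxC A [] σ})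
      (fun b hb => absurd (Subtype.ext (List.length_eq_zero_iff.1 b.2.1)) hb)]
    simp [strP]
  | cons j τ ih =>
    rw [← Equiv.tsum_eq (boxConsEquiv A j τ).symm]
    have hval : ∀ x : {a // a ∈ A j} × {l // boxC A τ l},
        ENNReal.ofReal (strP P (((boxConsEquiv A j τ).symm x :
            {σ : List ℕ // boxC A (j :: τ) σ}) : List ℕ))
          = ENNReal.ofReal (P (x.1 : ℕ)) * ENNReal.ofReal (strP P (x.2 : List ℕ)) := by
      rintro ⟨⟨a, ha⟩, ⟨l, hl⟩⟩
      have hv : (((boxConsEquiv A j τ).symm (⟨a, ha⟩, ⟨l, hl⟩) :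
          {σ : List ℕ // boxC A (j :: τ) σ}) : List ℕ) = a :: l := rfl
      rw [hv]
      simp only [strP, List.map_cons, List.prod_cons]
      exact ENNReal.ofReal_mul (hpos j a ha)
    rw [tsum_congr hval,
      ENNReal.tsum_prod' (f := fun (p : {a // a ∈ A j} × {l // boxC A τ l}) =>
        ENNReal.ofReal (P (p.1 : ℕ)) * ENNReal.ofReal (strP P (p.2 : List ℕ)))]
    simp only [ENNReal.tsum_mul_left, ENNReal.tsum_mul_right]
    rw [ih, ofReal_tsum_A A P Q hpos hQ j]
    rw [← ENNReal.ofReal_mul (by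
      have := (hQ j).tsum_eq
      exact this ▸ tsum_nonneg fun a => hpos j a a.2)]
    simp [strP]

lemma mOpen_le (hpos : ∀ i, ∀ a ∈ A i, 0 ≤ P a)
    (hQ : ∀ i, HasSum (fun a : A i => P (a : ℕ)) (Q i))
    (n : ℕ) (C : Set (ℕ × List (Fin L))) :
    mOpen P {σ | ∃ τ : List (Fin L), (n, τ) ∈ C ∧ boxC A τ σ}
      ≤ mOpen Q {τ | (n, τ) ∈ C} := by
  classical
  set S := {σ | ∃ τ : List (Fin L), (n, τ) ∈ C ∧ boxC A τ σ}
  set T := Σ τ : {τ : List (Fin L) // (n, τ) ∈ C}, {σ : List ℕ // boxC A τ.1 σ}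
  have hmap : ∀ σ : S, T := fun σ =>
    ⟨⟨Classical.choose σ.2, (Classical.choose_spec σ.2).1⟩,
      ⟨σ.1, (Classical.choose_spec σ.2).2⟩⟩
  set i : S → T := fun σ =>
    ⟨⟨Classical.choose σ.2, (Classical.choose_spec σ.2).1⟩,
      ⟨σ.1, (Classical.choose_spec σ.2).2⟩⟩ with hi
  have hinj : Function.Injective i := by
    intro x y hxy
    have := congrArg (fun t : T => (t.2 : List ℕ)) hxy
    exact Subtype.ext this
  calc mOpen P S = ∑' σ : S, ENNReal.ofReal (strP P ((i σ).2 : List ℕ)) := by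
        apply tsum_congr; intro σ; rfl
    _ ≤ ∑' t : T, ENNReal.ofReal (strP P (t.2 : List ℕ)) :=
        ENNReal.tsum_comp_le_tsum_of_injective hinj _
    _ = ∑' τ : {τ : List (Fin L) // (n, τ) ∈ C}, ∑' σ : {σ : List ℕ // boxC A τ.1 σ},
          ENNReal.ofReal (strP P (σ : List ℕ)) := ENNReal.tsum_sigma' _
    _ = ∑' τ : {τ : List (Fin L) // (n, τ) ∈ C}, ENNReal.ofReal (strP Q τ.1) := by
        exact tsum_congr fun τ => box_tsum A P Q hpos hQ τ.1
    _ = mOpen Q {τ | (n, τ) ∈ C} := rfl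

end StmtAux

/-- Contraction of an ensemble: replacing the elements of each
set `Aᵢ` of an r.e. partition of `Ω` by a single symbol `aᵢ` of a finite alphabet
maps a Martin-Löf `P`-random sequence to a Martin-Löf `Q`-random sequence, where
`Q(aᵢ) = P(Aᵢ)`. -/
theorem stmt11 (Ω : Set ℕ) (hre : REPred (· ∈ Ω)) (hinf : Ω.Infinite)
    (P : ℕ → ℝ) (hP : isProb Ω P)
    (L : ℕ) (A : Fin L → Set ℕ) (hAre : ∀ i, REPred (· ∈ A i))
    (hcover : (⋃ i, A i) = Ω) (hdisj : ∀ i j, i ≠ j → A i ∩ A j = ∅)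
    (Q : Fin L → ℝ) (hQ : ∀ i, HasSum (fun a : A i => P (a : ℕ)) (Q i))
    (α : ℕ → ℕ) (hα : seqIn Ω α) (hrand : MLRandom Ω P α)
    (β : ℕ → Fin L) (hβ : ∀ n, ∀ i, α n ∈ A i → β n = i) :
    MLRandom (Set.univ : Set (Fin L)) Q β := by
  classical
  have hsub : ∀ i, A i ⊆ Ω := fun i => hcover ▸ Set.subset_iUnion A i
  have hpos : ∀ i, ∀ a ∈ A i, 0 ≤ P a := fun i a ha => hP.1 a (hsub i ha)
  have hL : 0 < L := by
    obtain ⟨x, hx⟩ := hinf.nonempty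
    rw [← hcover] at hx
    obtain ⟨i, -⟩ := Set.mem_iUnion.1 hx
    exact i.pos
  intro C hC
  set D : Set (ℕ × List ℕ) :=
    {x | ∃ τ : List (Fin L), (x.1, τ) ∈ C ∧ StmtAux.boxC A τ x.2} with hD
  have hDtest : MLTest Ω P D := by
    refine ⟨StmtAux.re_D hL A hAre C hC.1, ?_, ?_⟩
    · -- alphabet condition
      rintro ⟨n, σ⟩ ⟨τ, hτC, hlen, hzip⟩ a ha
      obtain ⟨m, hm, rfl⟩ := List.mem_iff_getElem.1 ha
      have hmτ : m < τ.length := hlen ▸ hm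
      have hz : (σ[m], τ[m]) ∈ σ.zip τ := by
        have hzl : m < (σ.zip τ).length := by
          simp [List.length_zip, hlen, hm, hmτ]
        have he : (σ.zip τ)[m]'hzl = (σ[m], τ[m]) := List.getElem_zip
        exact he ▸ List.getElem_mem hzl
      exact hsub _ (hzip _ hz)
    · intro n hn
      obtain ⟨hCpf, hCm⟩ := hC.2.2 n hn
      constructor
      · -- prefix-free
        rintro σ ⟨τ, hτ, hlen, hzip⟩ σ' ⟨τ', hτ', hlen', hzip'⟩ hpre
        have hll : σ.length ≤ σ'.length := hpre.length_le
        have hget : ∀ m, m < σ.length → ∀ (h1 : m < τ.length) (h2 : m < τ'.length),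
            τ[m] = τ'[m] := by
          intro m hmσ h1 h2
          have hmσ' : m < σ'.length := lt_of_lt_of_le hmσ hll
          have hz1 : (σ[m], τ[m]) ∈ σ.zip τ := by
            have hzl : m < (σ.zip τ).length := by
              simp [List.length_zip, hmσ, h1]
            have he : (σ.zip τ)[m]'hzl = (σ[m], τ[m]) := List.getElem_zip
            exact he ▸ List.getElem_mem hzl
          have hz2 : (σ'[m], τ'[m]) ∈ σ'.zip τ' := by
            have hzl : m < (σ'.zip τ').length := by
              simp [List.length_zip, hmσ', h2]
            have he : (σ'.zip τ')[m]'hzl = (σ'[m], τ'[m]) := List.getElem_zip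
            exact he ▸ List.getElem_mem hzl
          have ha1 : σ[m] ∈ A τ[m] := hzip _ hz1
          have ha2 : σ[m] ∈ A τ'[m] := by
            have : σ[m] = σ'[m] := hpre.getElem hmσ
            rw [this]; exact hzip' _ hz2
          by_contra hne
          exact Set.eq_empty_iff_forall_notMem.1 (hdisj _ _ hne) σ[m] ⟨ha1, ha2⟩
        have hτpre : τ <+: τ' := by
          rw [List.prefix_iff_eq_take]
          have hlt : τ.length ≤ τ'.length := by rw [← hlen, ← hlen']; exact hll
          apply List.ext_getElem (by simp [List.length_take]; omega)
          intro m h1 h2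
          have hmσ : m < σ.length := hlen ▸ h1
          rw [List.getElem_take]
          exact hget m hmσ h1 (by omega)
        have hττ' : τ = τ' := hCpf τ hτ τ' hτ' hτpre
        exact hpre.eq_of_length (by rw [hlen, hττ', ← hlen'])
      · -- measure
        exact lt_of_le_of_lt (StmtAux.mOpen_le A P Q hpos hQ n C) hCm
  obtain ⟨n, hn1, hn2⟩ := hrand D hDtest
  refine ⟨n, hn1, fun hmem => hn2 ?_⟩
  obtain ⟨k, hk⟩ := hmem
  refine ⟨k, pre β k, hk, by simp [pre], ?_⟩
  intro p hp
  obtain ⟨m, hm, rfl⟩ := List.mem_iff_getElem.1 hp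
  have hmk : m < k := by
    simpa [pre, List.length_zip] using hm
  have h1 : ((pre α k).zip (pre β k))[m]'hm = (α m, β m) := by
    simp [pre, List.getElem_zip, List.getElem_ofFn]
  rw [h1]
  have hΩ : α m ∈ Ω := hα m
  rw [← hcover] at hΩ
  obtain ⟨i, hi⟩ := Set.mem_iUnion.1 hΩ
  show α m ∈ A (β m)
  rw [hβ m i hi]
  exact hi
end

section
/- Let Ω be an r.e. infinite set and P a discrete probability space on Ω. Let α be Martin-Löf P-random, and let f be a partial computable function from Ω* to {YES, NO} such that f(α↾k) is defined for all k and {k : f(α↾k) = YES} is infinite. Then the sequence β of selected elements, β(k) = α(s_f(α,k)+1) where s_f(α,k) is the k-th index ℓ with f(α↾ℓ) = YES, is Martin-Löf P-random. (Closure under selection by partial computable generalized selection functions.) -/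
open scoped ENNReal

namespace Stmt15Aux


/-- selection accumulator: result of scanning the first `n` symbols of `τ`,
    selecting symbol `τ_i` when `g (τ.take i) = true`. -/
def selA (g : List ℕ → Bool) (τ : List ℕ) : ℕ → List ℕ
  | 0 => []
  | n + 1 => selA g τ n ++ (if g (τ.take n) then [τ.getD n 0] else [])

def selT (g : List ℕ → Bool) (τ : List ℕ) : List ℕ := selA g τ τ.length

open Classical in
noncomputable def gbF (f : List ℕ →. Bool) (σ : List ℕ) : Bool :=
  if h : (f σ).Dom then (f σ).get h else false

lemma gbF_eq_true {f : List ℕ →. Bool} {σ : List ℕ} :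
    gbF f σ = true ↔ true ∈ f σ := by
  unfold gbF
  split
  · next h => exact ⟨fun e => e ▸ Part.get_mem h, fun e => Part.get_eq_of_mem e h⟩
  · next h =>
      constructor
      · intro e; exact absurd e (by simp)
      · intro e; exact absurd (Part.dom_iff_mem.2 ⟨_, e⟩) h

lemma selA_prefix_eval (g : List ℕ → Bool) {τ υ : List ℕ} (h : τ <+: υ) :
    ∀ m, m ≤ τ.length → selA g υ m = selA g τ m := by
  obtain ⟨r, rfl⟩ := h
  intro m hm
  induction m with
  | zero => rfl
  | succ n ih =>
      have hn : n ≤ τ.length := Nat.le_of_succ_le hm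
      have h1 : (τ ++ r).take n = τ.take n := List.take_append_of_le_length hn
      have h2 : (τ ++ r).getD n 0 = τ.getD n 0 := by
        have := List.getElem?_append_left (l₁ := τ) (l₂ := r) (i := n) hm
        simp [List.getD_eq_getElem?_getD, this]
      rw [selA, selA, ih hn, h1, h2]

lemma selA_mono (g : List ℕ → Bool) (τ : List ℕ) {m n : ℕ} (h : m ≤ n) :
    selA g τ m <+: selA g τ n := by
  induction n with
  | zero => simp_all
  | succ k ih =>
      rcases Nat.lt_or_ge m (k+1) with h' | h'
      · exact (ih (Nat.lt_succ_iff.1 h')).trans ⟨_, rfl⟩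
      · have : m = k + 1 := le_antisymm h h'
        subst this; exact List.prefix_refl _

lemma selT_prefix (g : List ℕ → Bool) {τ υ : List ℕ} (h : τ <+: υ) :
    selT g τ <+: selT g υ := by
  unfold selT
  rw [← selA_prefix_eval g h τ.length le_rfl]
  exact selA_mono g υ h.length_le

lemma selT_concat (g : List ℕ → Bool) (τ : List ℕ) (a : ℕ) :
    selT g (τ ++ [a]) = selT g τ ++ (if g τ then [a] else []) := by
  unfold selT
  have hlen : (τ ++ [a]).length = τ.length + 1 := by simp
  rw [hlen, selA]
  have h1 : (τ ++ [a]).take τ.length = τ := List.take_left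
  have h2 : (τ ++ [a]).getD τ.length 0 = a := by
    simp [List.getD_eq_getElem?_getD, List.getElem?_append_right (le_refl τ.length)]
  rw [selA_prefix_eval g ⟨[a], rfl⟩ τ.length le_rfl, h1, h2]



lemma strP_append (P : ℕ → ℝ) (u v : List ℕ) : strP P (u ++ v) = strP P u * strP P v := by
  simp [strP]

lemma strP_nil (P : ℕ → ℝ) : strP P ([] : List ℕ) = 1 := by simp [strP]

lemma strP_cons (P : ℕ → ℝ) (a : ℕ) (t : List ℕ) : strP P (a :: t) = P a * strP P t := by
  simp [strP]

lemma strP_nonneg {Ω : Set ℕ} {P : ℕ → ℝ} (hP : ∀ a ∈ Ω, 0 ≤ P a) :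
    ∀ {σ : List ℕ}, strIn Ω σ → 0 ≤ strP P σ := by
  intro σ
  induction σ with
  | nil => intro _; rw [strP_nil]; norm_num
  | cons a t ih =>
      intro h
      rw [strP_cons]
      exact mul_nonneg (hP a (h a (List.mem_cons_self)))
        (ih fun b hb => h b (List.mem_cons_of_mem _ hb))

lemma tsum_Q_one {Ω : Set ℕ} {P : ℕ → ℝ} (hP : isProb Ω P) :
    ∑' a : Ω, ENNReal.ofReal (P a) = 1 := by
  rw [← ENNReal.ofReal_tsum_of_nonneg (fun a : Ω => hP.1 a a.2) hP.2.summable, hP.2.tsum_eq]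
  exact ENNReal.ofReal_one

lemma sum_Q_le_one {Ω : Set ℕ} {P : ℕ → ℝ} (hP : isProb Ω P) (s : Finset ℕ)
    (hs : ∀ a ∈ s, a ∈ Ω) : ∑ a ∈ s, ENNReal.ofReal (P a) ≤ 1 := by
  have h1 : ∑' a : ℕ, Set.indicator Ω (fun a => ENNReal.ofReal (P a)) a = 1 := by
    rw [← tsum_subtype]; exact tsum_Q_one hP
  calc ∑ a ∈ s, ENNReal.ofReal (P a)
      = ∑ a ∈ s, Set.indicator Ω (fun a => ENNReal.ofReal (P a)) a := by
        refine Finset.sum_congr rfl fun a ha => ?_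
        rw [Set.indicator_of_mem (hs a ha)]
    _ ≤ ∑' a : ℕ, Set.indicator Ω (fun a => ENNReal.ofReal (P a)) a := ENNReal.sum_le_tsum s
    _ = 1 := h1

lemma kraft_finset {Ω : Set ℕ} {P : ℕ → ℝ} (hP : isProb Ω P) :
    ∀ (N : ℕ) (F : Finset (List ℕ)), (∀ σ ∈ F, strIn Ω σ ∧ σ.length ≤ N) →
    (∀ σ ∈ F, ∀ τ ∈ F, σ <+: τ → σ = τ) →
    ∑ σ ∈ F, ENNReal.ofReal (strP P σ) ≤ 1 := by
  intro N
  induction N with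
  | zero =>
      intro F hF _
      have hsub : F ⊆ {[]} := by
        intro σ hσ
        have : σ.length = 0 := Nat.le_zero.1 (hF σ hσ).2
        simp [List.length_eq_zero_iff.1 this]
      calc ∑ σ ∈ F, ENNReal.ofReal (strP P σ)
          ≤ ∑ σ ∈ ({[]} : Finset (List ℕ)), ENNReal.ofReal (strP P σ) :=
            Finset.sum_le_sum_of_subset hsub
        _ = 1 := by simp [strP_nil]
  | succ N ih =>
      intro F hF hpf
      by_cases hnil : ([] : List ℕ) ∈ F
      · have hsub : F ⊆ {[]} := by
          intro σ hσ
          have := hpf [] hnil σ hσ (by simp : ([]:List ℕ) <+: σ)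
          simp [← this]
        calc ∑ σ ∈ F, ENNReal.ofReal (strP P σ)
            ≤ ∑ σ ∈ ({[]} : Finset (List ℕ)), ENNReal.ofReal (strP P σ) :=
              Finset.sum_le_sum_of_subset hsub
          _ = 1 := by simp [strP_nil]
      · have hne : ∀ σ ∈ F, σ ≠ [] := fun σ hσ e => hnil (e ▸ hσ)
        have hcons : ∀ σ ∈ F, σ = σ.headI :: σ.tail := by
          intro σ hσ
          cases σ with
          | nil => exact absurd rfl (hne _ hσ)
          | cons a t => rfl
        classical
        have key : ∑ a ∈ F.image List.headI,
            ∑ σ ∈ F.filter (fun σ => σ.headI = a), ENNReal.ofReal (strP P σ)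
            = ∑ σ ∈ F, ENNReal.ofReal (strP P σ) :=
          Finset.sum_fiberwise_of_maps_to (fun σ hσ => Finset.mem_image.2 ⟨σ, hσ, rfl⟩) _
        rw [← key]
        have hbound : ∀ a ∈ F.image List.headI,
            ∑ σ ∈ F.filter (fun σ => σ.headI = a), ENNReal.ofReal (strP P σ)
            ≤ ENNReal.ofReal (P a) := by
          intro a ha
          obtain ⟨σ₀, hσ₀, rfl⟩ := Finset.mem_image.1 ha
          have haΩ : σ₀.headI ∈ Ω := by
            have := (hF σ₀ hσ₀).1
            exact this _ (by rw [hcons σ₀ hσ₀]; exact List.mem_cons_self)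
          set a := σ₀.headI with ha_def
          set Fa := F.filter (fun σ => σ.headI = a) with hFa
          have hmemFa : ∀ σ ∈ Fa, σ ∈ F ∧ σ = a :: σ.tail := by
            intro σ hσ
            rw [hFa, Finset.mem_filter] at hσ
            exact ⟨hσ.1, by rw [← hσ.2]; exact hcons σ hσ.1⟩
          have himg : ∑ t ∈ Fa.image List.tail, ENNReal.ofReal (strP P t)
              = ∑ σ ∈ Fa, ENNReal.ofReal (strP P σ.tail) :=
            Finset.sum_image fun x hx y hy e => by
              rw [(hmemFa x hx).2, (hmemFa y hy).2, e]
          have hIH : ∑ t ∈ Fa.image List.tail, ENNReal.ofReal (strP P t) ≤ 1 := by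
            refine ih _ ?_ ?_
            · intro t ht
              obtain ⟨σ, hσ, rfl⟩ := Finset.mem_image.1 ht
              obtain ⟨hσF, hσc⟩ := hmemFa σ hσ
              constructor
              · intro b hb
                exact (hF σ hσF).1 b (by rw [hσc]; exact List.mem_cons_of_mem _ hb)
              · have := (hF σ hσF).2
                have hl : σ.length = σ.tail.length + 1 := by
                  rw [hσc]; simp
                omega
            · intro t ht u hu htu
              obtain ⟨σ, hσ, rfl⟩ := Finset.mem_image.1 ht
              obtain ⟨τ, hτ, rfl⟩ := Finset.mem_image.1 hu
              obtain ⟨hσF, hσc⟩ := hmemFa σ hσ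
              obtain ⟨hτF, hτc⟩ := hmemFa τ hτ
              have : σ <+: τ := by
                rw [hσc, hτc]
                exact List.cons_prefix_cons.2 ⟨rfl, htu⟩
              rw [hpf σ hσF τ hτF this]
          calc ∑ σ ∈ Fa, ENNReal.ofReal (strP P σ)
              = ∑ σ ∈ Fa, ENNReal.ofReal (P a) * ENNReal.ofReal (strP P σ.tail) := by
                refine Finset.sum_congr rfl fun σ hσ => ?_
                obtain ⟨hσF, hσc⟩ := hmemFa σ hσ
                rw [show strP P σ = P a * strP P σ.tail by rw [hσc, strP_cons]; rw [← hσc],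
                  ENNReal.ofReal_mul (hP.1 a haΩ)]
            _ = ENNReal.ofReal (P a) * ∑ σ ∈ Fa, ENNReal.ofReal (strP P σ.tail) := by
                rw [Finset.mul_sum]
            _ ≤ ENNReal.ofReal (P a) * 1 := by
                refine mul_le_mul_right ?_ _
                rw [← himg]; exact hIH
            _ = ENNReal.ofReal (P a) := mul_one _
        calc ∑ a ∈ F.image List.headI,
              ∑ σ ∈ F.filter (fun σ => σ.headI = a), ENNReal.ofReal (strP P σ)
            ≤ ∑ a ∈ F.image List.headI, ENNReal.ofReal (P a) := Finset.sum_le_sum hbound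
          _ ≤ 1 := by
              refine sum_Q_le_one hP _ fun a ha => ?_
              obtain ⟨σ, hσ, rfl⟩ := Finset.mem_image.1 ha
              exact (hF σ hσ).1 _ (by rw [hcons σ hσ]; exact List.mem_cons_self)

lemma kraft {Ω : Set ℕ} {P : ℕ → ℝ} (hP : isProb Ω P) {S : Set (List ℕ)}
    (hpf : prefixFree S) (hin : ∀ σ ∈ S, strIn Ω σ) :
    ∑' σ : S, ENNReal.ofReal (strP P (σ : List ℕ)) ≤ 1 := by
  rw [ENNReal.tsum_eq_iSup_sum]
  refine iSup_le fun F => ?_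
  classical
  have := Finset.sum_image (g := (Subtype.val : S → List ℕ)) (s := F)
    (f := fun σ => ENNReal.ofReal (strP P σ))
    (fun x _ y _ e => Subtype.ext e)
  rw [show ∑ σ ∈ F, ENNReal.ofReal (strP P (σ : List ℕ))
      = ∑ σ ∈ F.image Subtype.val, ENNReal.ofReal (strP P σ) from this.symm]
  refine kraft_finset hP ((F.image Subtype.val).sup List.length) _ ?_ ?_
  · intro σ hσ
    obtain ⟨x, hx, rfl⟩ := Finset.mem_image.1 hσ
    exact ⟨hin _ x.2, Finset.le_sup hσ⟩
  · intro σ hσ τ hτ hστ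
    obtain ⟨x, hx, rfl⟩ := Finset.mem_image.1 hσ
    obtain ⟨y, hy, rfl⟩ := Finset.mem_image.1 hτ
    exact hpf _ x.2 _ y.2 hστ

lemma kraft_rel {Ω : Set ℕ} {P : ℕ → ℝ} (hP : isProb Ω P) {τ₀ : List ℕ}
    (hτ₀ : strIn Ω τ₀) {S : Set (List ℕ)}
    (hpf : prefixFree S) (hin : ∀ σ ∈ S, strIn Ω σ) (hext : ∀ σ ∈ S, τ₀ <+: σ) :
    ∑' σ : S, ENNReal.ofReal (strP P (σ : List ℕ)) ≤ ENNReal.ofReal (strP P τ₀) := by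
  have himg : S = (fun η => τ₀ ++ η) '' {η | τ₀ ++ η ∈ S} := by
    ext σ
    constructor
    · intro hσ
      obtain ⟨r, rfl⟩ := hext σ hσ
      exact ⟨r, hσ, rfl⟩
    · rintro ⟨η, hη, rfl⟩; exact hη
  set T : Set (List ℕ) := {η : List ℕ | τ₀ ++ η ∈ S} with hT
  have hdropmem : ∀ σ : S, (σ : List ℕ).drop τ₀.length ∈ T := by
    intro σ
    obtain ⟨r, hr⟩ := hext σ.1 σ.2
    show τ₀ ++ (σ : List ℕ).drop τ₀.length ∈ S
    rw [← hr, List.drop_left, hr]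
    exact σ.2
  have happ : ∀ σ : S, τ₀ ++ (σ : List ℕ).drop τ₀.length = (σ : List ℕ) := by
    intro σ
    obtain ⟨r, hr⟩ := hext σ.1 σ.2
    rw [← hr, List.drop_left]
  set j : S → T := fun σ => ⟨(σ : List ℕ).drop τ₀.length, hdropmem σ⟩ with hj
  have hjinj : Function.Injective j := by
    intro x y e
    have : ((j x : T) : List ℕ) = ((j y : T) : List ℕ) := by rw [e]
    have h2 : τ₀ ++ ((j x : T) : List ℕ) = τ₀ ++ ((j y : T) : List ℕ) := by rw [this]
    apply Subtype.ext
    rw [← happ x, ← happ y]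
    exact h2
  set g : T → ℝ≥0∞ := fun η => ENNReal.ofReal (strP P τ₀) * ENNReal.ofReal (strP P (η : List ℕ))
    with hg
  have hpt : ∀ σ : S, ENNReal.ofReal (strP P (σ : List ℕ)) = g (j σ) := by
    intro σ
    rw [hg]
    show _ = ENNReal.ofReal (strP P τ₀) * ENNReal.ofReal (strP P ((σ : List ℕ).drop τ₀.length))
    rw [← ENNReal.ofReal_mul (strP_nonneg hP.1 hτ₀), ← strP_append, happ σ]
  rw [tsum_congr hpt]
  have hTsum : ∑' η : T, ENNReal.ofReal (strP P (η : List ℕ)) ≤ 1 := by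
    refine kraft hP ?_ ?_
    · intro η hη η' hη' hp
      have := hpf _ hη _ hη' ((List.prefix_append_right_inj τ₀).2 hp)
      exact List.append_cancel_left this
    · intro η hη b hb
      exact hin _ hη b (by simp [hb])
  calc ∑' σ : S, g (j σ) ≤ ∑' η : T, g η := ENNReal.tsum_comp_le_tsum_of_injective hjinj g
    _ = ENNReal.ofReal (strP P τ₀) * ∑' η : T, ENNReal.ofReal (strP P (η : List ℕ)) :=
        ENNReal.tsum_mul_left
    _ ≤ ENNReal.ofReal (strP P τ₀) * 1 := mul_le_mul_right hTsum _
    _ = _ := mul_one _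



lemma take_of_prefix {u v : List ℕ} (h : u <+: v) {i : ℕ} (hi : i ≤ u.length) :
    v.take i = u.take i := by
  obtain ⟨r, rfl⟩ := h; exact List.take_append_of_le_length hi

lemma getD_of_prefix {u v : List ℕ} (h : u <+: v) {i : ℕ} (hi : i < u.length) :
    v.getD i 0 = u.getD i 0 := by
  obtain ⟨r, rfl⟩ := h
  have := List.getElem?_append_left (l₁ := u) (l₂ := r) (i := i) hi
  simp [List.getD_eq_getElem?_getD, this]

lemma prefix_dropLast {u v : List ℕ} (h : u <+: v) (hlt : u.length < v.length) :
    u <+: v.dropLast := by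
  have h1 : v.dropLast = v.take (v.length - 1) := (List.dropLast_eq_take (l := v)).symm ▸ rfl
  have h2 : u = v.take u.length := List.prefix_iff_eq_take.1 h
  have h3 : (v.take (v.length - 1)).take u.length = v.take u.length := by
    rw [List.take_take, min_eq_left (by omega)]
  rw [h1, h2, ← h3]
  exact List.take_prefix _ _

lemma length_lt_of_prefix_ne {u v : List ℕ} (h : u <+: v) (hne : u ≠ v) :
    u.length < v.length := by
  rcases lt_or_eq_of_le h.length_le with h' | h'
  · exact h'
  · exact absurd (h.eq_of_length h') hne


section EFD

def ESet (Ω : Set ℕ) (f : List ℕ →. Bool) (ρ : List ℕ) : Set (List ℕ) :=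
  {τ | strIn Ω τ ∧ (∀ i < τ.length, (f (τ.take i)).Dom) ∧ true ∈ f τ ∧ selT (gbF f) τ = ρ}

def FSet (Ω : Set ℕ) (f : List ℕ →. Bool) (σ : List ℕ) : Set (List ℕ) :=
  {τ | strIn Ω τ ∧ (∀ i < τ.length, (f (τ.take i)).Dom) ∧ τ ≠ [] ∧
    true ∈ f τ.dropLast ∧ selT (gbF f) τ = σ}

def DSet (Ω : Set ℕ) (f : List ℕ →. Bool) (C : Set (ℕ × List ℕ)) : Set (ℕ × List ℕ) :=
  {x | x.2 ∈ FSet Ω f (selT (gbF f) x.2) ∧ (x.1, selT (gbF f) x.2) ∈ C}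

variable {Ω : Set ℕ} {f : List ℕ →. Bool} {P : ℕ → ℝ}

lemma E_prefixFree (Ω : Set ℕ) (f : List ℕ →. Bool) (ρ : List ℕ) :
    prefixFree (ESet Ω f ρ) := by
  rintro τ ⟨hin, hdom, htrue, hsel⟩ τ' ⟨hin', hdom', htrue', hsel'⟩ hpre
  by_contra hne
  have hlt : τ.length < τ'.length := length_lt_of_prefix_ne hpre hne
  have hg : gbF f τ = true := gbF_eq_true.2 htrue
  have htk : τ'.take τ.length = τ := (List.prefix_iff_eq_take.1 hpre).symm
  have h1 : selA (gbF f) τ' (τ.length + 1) = ρ ++ [τ'.getD τ.length 0] := by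
    rw [selA, selA_prefix_eval _ hpre _ le_rfl, htk, hg]
    have hx : selA (gbF f) τ τ.length = ρ := hsel
    rw [hx]
    simp
  have h2 : selA (gbF f) τ' (τ.length + 1) <+: selT (gbF f) τ' := selA_mono _ _ hlt
  rw [hsel', h1] at h2
  have := h2.length_le
  simp at this

lemma selT_dropLast_concat {τ : List ℕ} (hne0 : τ ≠ [])
    (htrue : true ∈ f τ.dropLast) :
    selT (gbF f) τ = selT (gbF f) τ.dropLast ++ [τ.getLast hne0] := by
  have hsplit : τ.dropLast ++ [τ.getLast hne0] = τ := List.dropLast_append_getLast hne0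
  conv_lhs => rw [← hsplit]
  rw [selT_concat, gbF_eq_true.2 htrue]
  simp

lemma F_prefixFree (Ω : Set ℕ) (f : List ℕ →. Bool) (σ : List ℕ) :
    prefixFree (FSet Ω f σ) := by
  rintro τ ⟨hin, hdom, hne0, htrue, hsel⟩ τ' ⟨hin', hdom', hne0', htrue', hsel'⟩ hpre
  by_contra hne
  have hlt : τ.length < τ'.length := length_lt_of_prefix_ne hpre hne
  have hd : τ <+: τ'.dropLast := prefix_dropLast hpre hlt
  have h1 : selT (gbF f) τ <+: selT (gbF f) τ'.dropLast := selT_prefix _ hd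
  have h2 : selT (gbF f) τ' = selT (gbF f) τ'.dropLast ++ [τ'.getLast hne0'] :=
    selT_dropLast_concat hne0' htrue'
  have h3 := h1.length_le
  rw [hsel] at h3
  have h4 : (selT (gbF f) τ').length = (selT (gbF f) τ'.dropLast).length + 1 := by
    rw [h2]; simp
  rw [hsel'] at h4
  omega

lemma F_nil (Ω : Set ℕ) (f : List ℕ →. Bool) : FSet Ω f [] = ∅ := by
  ext τ
  simp only [Set.mem_empty_iff_false, iff_false]
  rintro ⟨hin, hdom, hne0, htrue, hsel⟩
  have h2 : selT (gbF f) τ = selT (gbF f) τ.dropLast ++ [τ.getLast hne0] :=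
    selT_dropLast_concat hne0 htrue
  rw [hsel] at h2
  exact absurd h2.symm (by simp)

lemma F_concat_mem {τ ρ : List ℕ} {a : ℕ}
    (hτ : τ ∈ FSet Ω f (ρ ++ [a])) :
    a ∈ Ω ∧ τ.dropLast ∈ ESet Ω f ρ ∧ τ = τ.dropLast ++ [a] := by
  obtain ⟨hin, hdom, hne0, htrue, hsel⟩ := hτ
  have hsplit : τ.dropLast ++ [τ.getLast hne0] = τ := List.dropLast_append_getLast hne0
  have h2 : selT (gbF f) τ = selT (gbF f) τ.dropLast ++ [τ.getLast hne0] :=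
    selT_dropLast_concat hne0 htrue
  rw [hsel] at h2
  obtain ⟨hsel₀, hlast⟩ := List.append_inj' h2 rfl
  have hlast' : τ.getLast hne0 = a := by
    have := hlast.symm
    simpa using this
  have hpreD : τ.dropLast <+: τ := ⟨[τ.getLast hne0], hsplit⟩
  refine ⟨?_, ⟨?_, ?_, ?_, hsel₀.symm⟩, ?_⟩
  · rw [← hlast']
    exact hin _ (List.getLast_mem hne0)
  · intro b hb
    exact hin b (List.dropLast_sublist τ |>.subset hb)
  · intro i hi
    have hi' : i < τ.length := by
      have := τ.dropLast_sublist.length_le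
      omega
    have : τ.take i = τ.dropLast.take i := take_of_prefix hpreD (le_of_lt hi)
    rw [← this]
    exact hdom i hi'
  · exact htrue
  · rw [← hlast']
    exact hsplit.symm

lemma E_concat_mem {τ₀ ρ : List ℕ} {a : ℕ} (ha : a ∈ Ω)
    (hτ₀ : τ₀ ∈ ESet Ω f ρ) : τ₀ ++ [a] ∈ FSet Ω f (ρ ++ [a]) := by
  obtain ⟨hin, hdom, htrue, hsel⟩ := hτ₀
  refine ⟨?_, ?_, by simp, ?_, ?_⟩
  · intro b hb
    rcases List.mem_append.1 hb with hb | hb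
    · exact hin b hb
    · simp at hb; exact hb ▸ ha
  · intro i hi
    have hi' : i ≤ τ₀.length := by simp at hi; omega
    rw [List.take_append_of_le_length hi']
    rcases Nat.lt_or_ge i τ₀.length with h | h
    · exact hdom i h
    · have : i = τ₀.length := le_antisymm hi' h
      rw [this, List.take_length]
      exact Part.dom_iff_mem.2 ⟨_, htrue⟩
  · rw [show (τ₀ ++ [a]).dropLast = τ₀ from by simp]
    exact htrue
  · rw [selT_concat, gbF_eq_true.2 htrue, hsel]
    simp

lemma exists_F_prefix {σ : List ℕ} (hσ : σ ≠ []) {τ : List ℕ}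
    (hτ : τ ∈ ESet Ω f σ) : ∃ τ', τ' ∈ FSet Ω f σ ∧ τ' <+: τ := by
  obtain ⟨hin, hdom, htrue, hsel⟩ := hτ
  classical
  have hex : ∃ n, selA (gbF f) τ n = σ := ⟨τ.length, hsel⟩
  have hfind := Nat.find_spec hex
  have hle : Nat.find hex ≤ τ.length := Nat.find_min' hex hsel
  have hpos : Nat.find hex ≠ 0 := by
    intro e
    rw [e] at hfind
    exact hσ hfind.symm
  obtain ⟨m, hm⟩ := Nat.exists_eq_succ_of_ne_zero hpos
  have hprev : selA (gbF f) τ m ≠ σ := Nat.find_min hex (by omega)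
  have hstep : selA (gbF f) τ (m+1) = σ := by
    rw [← Nat.succ_eq_add_one, ← hm]
    exact hfind
  have hgb : gbF f (τ.take m) = true := by
    by_contra hng
    have : gbF f (τ.take m) = false := by
      cases h : gbF f (τ.take m)
      · rfl
      · exact absurd h hng
    rw [selA, this] at hstep
    simp at hstep
    exact hprev hstep
  have hmlt : m + 1 ≤ τ.length := by omega
  set τ' := τ.take (m+1) with hτ'
  have hlen' : τ'.length = m + 1 := by
    rw [hτ', List.length_take]
    omega
  have hpre' : τ' <+: τ := List.take_prefix _ _
  refine ⟨τ', ⟨?_, ?_, ?_, ?_, ?_⟩, hpre'⟩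
  · intro b hb
    exact hin b (List.take_subset _ _ hb)
  · intro i hi
    rw [hlen'] at hi
    have : τ'.take i = τ.take i := by
      rw [hτ', List.take_take, min_eq_left (by omega)]
    rw [this]
    exact hdom i (by omega)
  · intro e
    rw [e] at hlen'
    simp at hlen'
  · have hdl : τ'.dropLast = τ.take m := by
      rw [hτ', List.dropLast_eq_take, List.take_take]
      congr 1
      rw [hlen']
      omega
    rw [hdl]
    exact gbF_eq_true.1 hgb
  · show selA (gbF f) τ' τ'.length = σ
    rw [hlen', ← selA_prefix_eval _ hpre' (m+1) (le_of_eq hlen'.symm)]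
    exact hstep

lemma sumE_le_sumF (hP : isProb Ω P) {σ : List ℕ} (hσ : σ ≠ []) :
    ∑' τ : ESet Ω f σ, ENNReal.ofReal (strP P (τ : List ℕ))
      ≤ ∑' τ' : FSet Ω f σ, ENNReal.ofReal (strP P (τ' : List ℕ)) := by
  classical
  set Fib : FSet Ω f σ → Set (List ℕ) :=
    fun τ' => {τ | τ ∈ ESet Ω f σ ∧ (τ' : List ℕ) <+: τ} with hFib
  have hchoice : ∀ τ : ESet Ω f σ, ∃ τ' : FSet Ω f σ, (τ : List ℕ) ∈ Fib τ' := by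
    intro τ
    obtain ⟨τ', hτ', hpre⟩ := exists_F_prefix hσ τ.2
    exact ⟨⟨τ', hτ'⟩, τ.2, hpre⟩
  set Φ : ESet Ω f σ → Σ τ' : FSet Ω f σ, Fib τ' := fun τ =>
    ⟨(hchoice τ).choose, ⟨(τ : List ℕ), (hchoice τ).choose_spec⟩⟩ with hΦ
  have hΦval : ∀ τ, (((Φ τ).2 : List ℕ)) = (τ : List ℕ) := fun τ => rfl
  have hΦinj : Function.Injective Φ := by
    intro x y e
    have h1 := congrArg (fun p : Σ τ' : FSet Ω f σ, Fib τ' => ((p.2 : List ℕ))) e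
    simp only [hΦval] at h1
    exact Subtype.ext h1
  calc ∑' τ : ESet Ω f σ, ENNReal.ofReal (strP P (τ : List ℕ))
      = ∑' τ : ESet Ω f σ,
          (fun p : Σ τ' : FSet Ω f σ, Fib τ' => ENNReal.ofReal (strP P ((p.2 : List ℕ)))) (Φ τ) :=
        tsum_congr fun τ => by rw [hΦval]
    _ ≤ ∑' p : Σ τ' : FSet Ω f σ, Fib τ', ENNReal.ofReal (strP P ((p.2 : List ℕ))) :=
        ENNReal.tsum_comp_le_tsum_of_injective hΦinj _
    _ = ∑' (τ' : FSet Ω f σ) (τ : Fib τ'), ENNReal.ofReal (strP P (τ : List ℕ)) :=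
        ENNReal.tsum_sigma (fun (τ' : FSet Ω f σ) (τ : Fib τ') => ENNReal.ofReal (strP P (τ : List ℕ)))
    _ ≤ ∑' τ' : FSet Ω f σ, ENNReal.ofReal (strP P (τ' : List ℕ)) := by
        refine ENNReal.tsum_le_tsum fun τ' => ?_
        refine kraft_rel hP τ'.2.1 ?_ ?_ ?_
        · intro x hx y hy hxy
          exact E_prefixFree Ω f σ x hx.1 y hy.1 hxy
        · exact fun x hx => hx.1.1
        · exact fun x hx => hx.2

lemma sumF_concat (hP : isProb Ω P) (f : List ℕ →. Bool) (ρ : List ℕ) (a : ℕ) :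
    ∑' τ : FSet Ω f (ρ ++ [a]), ENNReal.ofReal (strP P (τ : List ℕ))
      ≤ ENNReal.ofReal (P a) * ∑' τ₀ : ESet Ω f ρ, ENNReal.ofReal (strP P (τ₀ : List ℕ)) := by
  classical
  set ψ : FSet Ω f (ρ ++ [a]) → ESet Ω f ρ := fun τ =>
    ⟨(τ : List ℕ).dropLast, (F_concat_mem τ.2).2.1⟩ with hψ
  have hψeq : ∀ τ : FSet Ω f (ρ ++ [a]), (τ : List ℕ) = ((ψ τ : List ℕ)) ++ [a] :=
    fun τ => (F_concat_mem τ.2).2.2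
  have hψinj : Function.Injective ψ := by
    intro x y e
    apply Subtype.ext
    rw [hψeq x, hψeq y]
    have : ((ψ x : List ℕ)) = ((ψ y : List ℕ)) := by rw [e]
    rw [this]
  set g : ESet Ω f ρ → ℝ≥0∞ :=
    fun τ₀ => ENNReal.ofReal (strP P (τ₀ : List ℕ)) * ENNReal.ofReal (P a) with hg
  have hpt : ∀ τ : FSet Ω f (ρ ++ [a]), ENNReal.ofReal (strP P (τ : List ℕ)) = g (ψ τ) := by
    intro τ
    rw [hg]
    show _ = ENNReal.ofReal (strP P ((ψ τ : List ℕ))) * ENNReal.ofReal (P a)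
    rw [← ENNReal.ofReal_mul (strP_nonneg hP.1 (ψ τ).2.1)]
    congr 1
    rw [hψeq τ, strP_append, strP_cons, strP_nil]
    ring
  calc ∑' τ : FSet Ω f (ρ ++ [a]), ENNReal.ofReal (strP P (τ : List ℕ))
      = ∑' τ : FSet Ω f (ρ ++ [a]), g (ψ τ) := tsum_congr hpt
    _ ≤ ∑' τ₀ : ESet Ω f ρ, g τ₀ := ENNReal.tsum_comp_le_tsum_of_injective hψinj g
    _ = (∑' τ₀ : ESet Ω f ρ, ENNReal.ofReal (strP P (τ₀ : List ℕ))) * ENNReal.ofReal (P a) :=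
        ENNReal.tsum_mul_right
    _ = ENNReal.ofReal (P a) * ∑' τ₀ : ESet Ω f ρ, ENNReal.ofReal (strP P (τ₀ : List ℕ)) :=
        mul_comm _ _

lemma sumE (hP : isProb Ω P) (f : List ℕ →. Bool) :
    ∀ ρ : List ℕ, strIn Ω ρ →
    ∑' τ : ESet Ω f ρ, ENNReal.ofReal (strP P (τ : List ℕ)) ≤ ENNReal.ofReal (strP P ρ) := by
  intro ρ
  induction ρ using List.reverseRecOn with
  | nil =>
      intro _
      rw [strP_nil, ENNReal.ofReal_one]
      exact kraft hP (E_prefixFree Ω f []) (fun τ h => h.1)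
  | append_singleton ρ' a ih =>
      intro hin
      have ha : a ∈ Ω := hin a (by simp)
      have hin' : strIn Ω ρ' := fun b hb => hin b (by simp [hb])
      calc ∑' τ : ESet Ω f (ρ' ++ [a]), ENNReal.ofReal (strP P (τ : List ℕ))
          ≤ ∑' τ' : FSet Ω f (ρ' ++ [a]), ENNReal.ofReal (strP P (τ' : List ℕ)) :=
            sumE_le_sumF hP (by simp)
        _ ≤ ENNReal.ofReal (P a) * ∑' τ₀ : ESet Ω f ρ', ENNReal.ofReal (strP P (τ₀ : List ℕ)) :=
            sumF_concat hP f ρ' a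
        _ ≤ ENNReal.ofReal (P a) * ENNReal.ofReal (strP P ρ') := mul_le_mul_right (ih hin') _
        _ = ENNReal.ofReal (strP P (ρ' ++ [a])) := by
            rw [← ENNReal.ofReal_mul (hP.1 a ha), strP_append, strP_cons, strP_nil]
            ring_nf

lemma sumF (hP : isProb Ω P) (f : List ℕ →. Bool) {σ : List ℕ} (hσin : strIn Ω σ) :
    ∑' τ : FSet Ω f σ, ENNReal.ofReal (strP P (τ : List ℕ)) ≤ ENNReal.ofReal (strP P σ) := by
  rcases List.eq_nil_or_concat σ with rfl | ⟨ρ, a, rfl⟩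
  · rw [F_nil Ω f]
    simp [strP_nil]
  · rw [List.concat_eq_append] at *
    have ha : a ∈ Ω := hσin a (by simp)
    have hin' : strIn Ω ρ := fun b hb => hσin b (by simp [hb])
    calc ∑' τ : FSet Ω f (ρ ++ [a]), ENNReal.ofReal (strP P (τ : List ℕ))
        ≤ ENNReal.ofReal (P a) * ∑' τ₀ : ESet Ω f ρ, ENNReal.ofReal (strP P (τ₀ : List ℕ)) :=
          sumF_concat hP f ρ a
      _ ≤ ENNReal.ofReal (P a) * ENNReal.ofReal (strP P ρ) := mul_le_mul_right (sumE hP f ρ hin') _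
      _ = ENNReal.ofReal (strP P (ρ ++ [a])) := by
          rw [← ENNReal.ofReal_mul (hP.1 a ha), strP_append, strP_cons, strP_nil]
          ring_nf

lemma sumD (hP : isProb Ω P) (f : List ℕ →. Bool) {C : Set (ℕ × List ℕ)}
    (hCin : ∀ x ∈ C, strIn Ω x.2) (n : ℕ) :
    mOpen P {τ | (n, τ) ∈ DSet Ω f C} ≤ mOpen P {σ | (n, σ) ∈ C} := by
  unfold mOpen
  classical
  set Dn : Set (List ℕ) := {τ | (n, τ) ∈ DSet Ω f C} with hDn
  set Cn : Set (List ℕ) := {σ | (n, σ) ∈ C} with hCn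
  set Φ : Dn → Σ σ : Cn, FSet Ω f (σ : List ℕ) := fun τ =>
    ⟨⟨selT (gbF f) (τ : List ℕ), τ.2.2⟩, ⟨(τ : List ℕ), τ.2.1⟩⟩ with hΦ
  have hΦinj : Function.Injective Φ := by
    intro x y e
    have h1 := congrArg (fun p : Σ σ : Cn, FSet Ω f (σ : List ℕ) => ((p.2 : List ℕ))) e
    exact Subtype.ext h1
  calc ∑' τ : Dn, ENNReal.ofReal (strP P (τ : List ℕ))
      = ∑' τ : Dn,
          (fun p : Σ σ : Cn, FSet Ω f (σ : List ℕ) =>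
            ENNReal.ofReal (strP P ((p.2 : List ℕ)))) (Φ τ) := tsum_congr fun τ => rfl
    _ ≤ ∑' p : Σ σ : Cn, FSet Ω f (σ : List ℕ), ENNReal.ofReal (strP P ((p.2 : List ℕ))) :=
        ENNReal.tsum_comp_le_tsum_of_injective hΦinj _
    _ = ∑' (σ : Cn) (τ : FSet Ω f (σ : List ℕ)), ENNReal.ofReal (strP P (τ : List ℕ)) :=
        ENNReal.tsum_sigma (fun (σ : Cn) (τ : FSet Ω f (σ : List ℕ)) =>
          ENNReal.ofReal (strP P (τ : List ℕ)))
    _ ≤ ∑' σ : Cn, ENNReal.ofReal (strP P (σ : List ℕ)) :=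
        ENNReal.tsum_le_tsum fun σ => sumF hP f (hCin (n, (σ : List ℕ)) σ.2)

lemma D_prefixFree (Ω : Set ℕ) (f : List ℕ →. Bool) (C : Set (ℕ × List ℕ)) (n : ℕ)
    (hpfC : prefixFree {σ | (n, σ) ∈ C}) :
    prefixFree {τ | (n, τ) ∈ DSet Ω f C} := by
  intro τ hτ τ' hτ' hpre
  have h1 : selT (gbF f) τ <+: selT (gbF f) τ' := selT_prefix _ hpre
  have h2 : selT (gbF f) τ = selT (gbF f) τ' := hpfC _ hτ.2 _ hτ'.2 h1
  exact F_prefixFree Ω f (selT (gbF f) τ') τ (h2 ▸ hτ.1) τ' hτ'.1 hpre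

end EFD

section Computability

def preTake (τ : List ℕ) (i : ℕ) : List ℕ := (List.range i).map fun j => τ.getD j 0

lemma preTake_eq {τ : List ℕ} {i : ℕ} (h : i ≤ τ.length) : preTake τ i = τ.take i := by
  apply List.ext_getElem
  · simp [preTake]
    omega
  · intro j h1 h2
    have hj : j < i := by simpa [preTake] using h1
    have hjl : j < τ.length := by omega
    simp [preTake, List.getElem_take, List.getD_eq_getElem?_getD, List.getElem?_eq_getElem hjl]

def selBody (Ω : Set ℕ) (f : List ℕ →. Bool) :
    List ℕ × ℕ × List ℕ →. List ℕ ⊕ (List ℕ × ℕ × List ℕ) := fun p =>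
  cond (decide (p.1.length ≤ p.2.1))
    (Part.some (Sum.inl p.2.2))
    ((f (preTake p.1 p.2.1)).bind fun b =>
      (Part.assert (p.1.getD p.2.1 0 ∈ Ω) fun _ => Part.some ()).map fun _ =>
        Sum.inr (p.1, p.2.1 + 1, cond b (p.2.2 ++ [p.1.getD p.2.1 0]) p.2.2))

variable {Ω : Set ℕ} {f : List ℕ →. Bool} {C : Set (ℕ × List ℕ)}

set_option maxHeartbeats 2000000 in
lemma selBody_partrec (hre : REPred (· ∈ Ω)) (hf : Partrec f) :
    Partrec (selBody Ω f) := by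
  have hτ : Computable fun p : List ℕ × ℕ × List ℕ => p.1 := Computable.fst
  have hi : Computable fun p : List ℕ × ℕ × List ℕ => p.2.1 :=
    Computable.fst.comp Computable.snd
  have hρ : Computable fun p : List ℕ × ℕ × List ℕ => p.2.2 :=
    Computable.snd.comp Computable.snd
  have hc : Computable fun p : List ℕ × ℕ × List ℕ => decide (p.1.length ≤ p.2.1) :=
    (Primrec.nat_le.comp (Primrec.list_length.comp Primrec.fst)
      (Primrec.fst.comp Primrec.snd)).decide.to_comp
  have hpt : Computable fun p : List ℕ × ℕ × List ℕ => preTake p.1 p.2.1 := by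
    have : Primrec fun p : List ℕ × ℕ × List ℕ => preTake p.1 p.2.1 := by
      refine Primrec.list_map (Primrec.list_range.comp (Primrec.fst.comp Primrec.snd)) ?_
      exact ((Primrec.list_getD 0).comp (Primrec.fst.comp Primrec.fst) Primrec.snd).to₂
    exact this.to_comp
  -- projections on q : (List ℕ × ℕ × List ℕ) × Bool
  have qτ : Computable fun q : (List ℕ × ℕ × List ℕ) × Bool => q.1.1 :=
    Computable.fst.comp Computable.fst
  have qi : Computable fun q : (List ℕ × ℕ × List ℕ) × Bool => q.1.2.1 :=
    Computable.fst.comp (Computable.snd.comp Computable.fst)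
  have qρ : Computable fun q : (List ℕ × ℕ × List ℕ) × Bool => q.1.2.2 :=
    Computable.snd.comp (Computable.snd.comp Computable.fst)
  have qb : Computable fun q : (List ℕ × ℕ × List ℕ) × Bool => q.2 := Computable.snd
  have qg : Computable fun q : (List ℕ × ℕ × List ℕ) × Bool => q.1.1.getD q.1.2.1 0 := by
    have : Primrec fun q : (List ℕ × ℕ × List ℕ) × Bool => q.1.1.getD q.1.2.1 0 :=
      (Primrec.list_getD 0).comp (Primrec.fst.comp Primrec.fst)
        (Primrec.fst.comp (Primrec.snd.comp Primrec.fst))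
    exact this.to_comp
  have qnxt : Computable fun q : (List ℕ × ℕ × List ℕ) × Bool =>
      (q.1.1, q.1.2.1 + 1, cond q.2 (q.1.2.2 ++ [q.1.1.getD q.1.2.1 0]) q.1.2.2) := by
    refine Computable.pair qτ (Computable.pair (Computable.succ.comp qi) ?_)
    refine Computable.cond qb ?_ qρ
    have : Primrec₂ fun (l : List ℕ) (a : ℕ) => l ++ [a] := Primrec.list_concat
    exact (this.comp (Primrec.snd.comp (Primrec.snd.comp Primrec.fst))
      ((Primrec.list_getD 0).comp (Primrec.fst.comp Primrec.fst)
        (Primrec.fst.comp (Primrec.snd.comp Primrec.fst)))).to_comp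
  have hwork : Partrec fun p : List ℕ × ℕ × List ℕ =>
      (f (preTake p.1 p.2.1)).bind fun b =>
        (Part.assert (p.1.getD p.2.1 0 ∈ Ω) fun _ => Part.some ()).map fun _ =>
          (Sum.inr (p.1, p.2.1 + 1, cond b (p.2.2 ++ [p.1.getD p.2.1 0]) p.2.2) :
            List ℕ ⊕ (List ℕ × ℕ × List ℕ)) := by
    have hg2 : Computable fun p : ((List ℕ × ℕ × List ℕ) × Bool) × Unit =>
        (Sum.inr (p.1.1.1, p.1.1.2.1 + 1,
            cond p.1.2 (p.1.1.2.2 ++ [p.1.1.1.getD p.1.1.2.1 0]) p.1.1.2.2) :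
          List ℕ ⊕ (List ℕ × ℕ × List ℕ)) :=
      (Computable.sumInr.comp qnxt).comp Computable.fst
    have hstep : Partrec fun q : (List ℕ × ℕ × List ℕ) × Bool =>
        (Part.assert (q.1.1.getD q.1.2.1 0 ∈ Ω) fun _ => Part.some ()).map fun _ =>
          (Sum.inr (q.1.1, q.1.2.1 + 1, cond q.2 (q.1.2.2 ++ [q.1.1.getD q.1.2.1 0]) q.1.2.2) :
            List ℕ ⊕ (List ℕ × ℕ × List ℕ)) :=
      Partrec.map (Partrec.comp hre qg) hg2
    exact Partrec.bind (hf.comp hpt) hstep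
  exact Partrec.cond hc ((Computable.sumInl (α := List ℕ) (β := List ℕ × ℕ × List ℕ)).comp hρ).partrec hwork

def wholeFn (Ω : Set ℕ) (f : List ℕ →. Bool) (C : Set (ℕ × List ℕ)) : ℕ × List ℕ →. Unit :=
  fun x =>
    (Part.assert (x.2 ≠ []) fun _ => Part.some ()).bind fun _ =>
      (PFun.fix (selBody Ω f) (x.2, 0, [])).bind fun ρ =>
        (f (preTake x.2 (x.2.length - 1))).bind fun b =>
          (Part.assert (b = true) fun _ => Part.some ()).bind fun _ =>
            Part.assert ((x.1, ρ) ∈ C) fun _ => Part.some ()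

set_option maxHeartbeats 1000000 in
lemma wholeFn_partrec (hre : REPred (· ∈ Ω)) (hf : Partrec f) (hC : REPred (· ∈ C)) :
    Partrec (wholeFn Ω f C) := by
  have hne : Partrec fun x : ℕ × List ℕ => Part.assert (x.2 ≠ []) fun _ => Part.some () := by
    have : REPred fun x : ℕ × List ℕ => x.2 ≠ [] := by
      refine ComputablePred.to_re (ComputablePred.computable_iff.2
        ⟨fun x => !decide (x.2 = []), ?_, ?_⟩)
      · exact (Primrec.not.comp ((Primrec.eq).comp Primrec.snd (Primrec.const [])).decide).to_comp
      · funext x; simp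
    exact this
  have hbt : Partrec fun s : (((ℕ × List ℕ) × Unit) × List ℕ) × Bool =>
      Part.assert (s.2 = true) fun _ => Part.some () := by
    have : REPred fun s : (((ℕ × List ℕ) × Unit) × List ℕ) × Bool => s.2 = true := by
      refine ComputablePred.to_re (ComputablePred.computable_iff.2
        ⟨fun s => s.2, Computable.snd, ?_⟩)
      funext s; simp
    exact this
  have l5 : Partrec fun t : ((((ℕ × List ℕ) × Unit) × List ℕ) × Bool) × Unit =>
      Part.assert ((t.1.1.1.1.1, t.1.1.2) ∈ C) fun _ => Part.some () := by
    refine Partrec.comp hC (Computable.pair ?_ ?_)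
    · exact Computable.fst.comp (Computable.fst.comp (Computable.fst.comp
        (Computable.fst.comp Computable.fst)))
    · exact Computable.snd.comp (Computable.fst.comp Computable.fst)
  have l4 : Partrec fun s : (((ℕ × List ℕ) × Unit) × List ℕ) × Bool =>
      (Part.assert (s.2 = true) fun _ => Part.some ()).bind fun _ =>
        Part.assert ((s.1.1.1.1, s.1.2) ∈ C) fun _ => Part.some () :=
    Partrec.bind hbt l5
  have hpt2 : Computable fun r : ((ℕ × List ℕ) × Unit) × List ℕ =>
      preTake r.1.1.2 (r.1.1.2.length - 1) := by
    have hτ : Primrec fun r : ((ℕ × List ℕ) × Unit) × List ℕ => r.1.1.2 :=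
      Primrec.snd.comp (Primrec.fst.comp Primrec.fst)
    have : Primrec fun r : ((ℕ × List ℕ) × Unit) × List ℕ =>
        preTake r.1.1.2 (r.1.1.2.length - 1) := by
      refine Primrec.list_map
        (Primrec.list_range.comp (Primrec.nat_sub.comp (Primrec.list_length.comp hτ)
          (Primrec.const 1))) ?_
      exact ((Primrec.list_getD 0).comp
        ((Primrec.snd.comp (Primrec.fst.comp Primrec.fst)).comp Primrec.fst) Primrec.snd).to₂
    exact this.to_comp
  have l3 : Partrec fun r : ((ℕ × List ℕ) × Unit) × List ℕ =>
      (f (preTake r.1.1.2 (r.1.1.2.length - 1))).bind fun b =>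
        (Part.assert (b = true) fun _ => Part.some ()).bind fun _ =>
          Part.assert ((r.1.1.1, r.2) ∈ C) fun _ => Part.some () :=
    Partrec.bind (hf.comp hpt2) l4
  have hinit : Computable fun p : (ℕ × List ℕ) × Unit =>
      ((p.1.2, 0, []) : List ℕ × ℕ × List ℕ) :=
    Computable.pair (Computable.snd.comp Computable.fst)
      (Computable.pair (Computable.const 0) (Computable.const []))
  have l2 : Partrec fun p : (ℕ × List ℕ) × Unit =>
      (PFun.fix (selBody Ω f) (p.1.2, 0, [])).bind fun ρ =>
        (f (preTake p.1.2 (p.1.2.length - 1))).bind fun b =>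
          (Part.assert (b = true) fun _ => Part.some ()).bind fun _ =>
            Part.assert ((p.1.1, ρ) ∈ C) fun _ => Part.some () :=
    Partrec.bind ((selBody_partrec hre hf).fix.comp hinit) l3
  exact Partrec.bind hne l2

lemma gbF_get {σ : List ℕ} (h : (f σ).Dom) : gbF f σ = (f σ).get h := by
  unfold gbF
  rw [dif_pos h]

lemma fix_mem_of {τ : List ℕ} :
    ∀ d i, τ.length - i = d → i ≤ τ.length →
      (∀ j, i ≤ j → j < τ.length → (f (τ.take j)).Dom ∧ τ.getD j 0 ∈ Ω) →
      selT (gbF f) τ ∈ PFun.fix (selBody Ω f) (τ, i, selA (gbF f) τ i) := by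
  intro d
  induction d with
  | zero =>
      intro i hd hle _
      have hi : i = τ.length := by omega
      subst hi
      rw [PFun.mem_fix_iff]
      left
      show _ ∈ selBody Ω f _
      simp [selBody, selT]
  | succ d ih =>
      intro i hd hle h
      have hi : i < τ.length := by omega
      have hDom : (f (τ.take i)).Dom := (h i le_rfl hi).1
      have hΩ : τ.getD i 0 ∈ Ω := (h i le_rfl hi).2
      rw [PFun.mem_fix_iff]
      right
      refine ⟨(τ, i+1, selA (gbF f) τ (i+1)), ?_, ?_⟩
      · show _ ∈ selBody Ω f (τ, i, selA (gbF f) τ i)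
        have hc : decide (τ.length ≤ i) = false := by simp; omega
        unfold selBody
        rw [hc]
        simp only [cond_false]
        rw [preTake_eq (le_of_lt hi)]
        rw [Part.mem_bind_iff]
        refine ⟨(f (τ.take i)).get hDom, Part.get_mem hDom, ?_⟩
        rw [Part.mem_map_iff]
        refine ⟨(), Part.mem_assert_iff.2 ⟨hΩ, Part.mem_some _⟩, ?_⟩
        have hrec : selA (gbF f) τ (i+1)
            = selA (gbF f) τ i ++ (if gbF f (τ.take i) then [τ.getD i 0] else []) := rfl
        congr 1
        refine Prod.ext rfl (Prod.ext rfl ?_)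
        cases hb : (f (τ.take i)).get hDom with
        | true => simp [hrec, gbF_get hDom, hb]
        | false => simp [hrec, gbF_get hDom, hb]
      · exact ih (i+1) (by omega) (by omega) (fun j h1 h2 => h j (by omega) h2)

lemma fix_conds {τ : List ℕ} :
    ∀ d i ρ (x : List ℕ), τ.length - i = d → x ∈ PFun.fix (selBody Ω f) (τ, i, ρ) →
      ∀ j, i ≤ j → j < τ.length → (f (τ.take j)).Dom ∧ τ.getD j 0 ∈ Ω := by
  intro d
  induction d with
  | zero => intro i ρ x hd _ j h1 h2; omega
  | succ d ih =>
      intro i ρ x hd hx j h1 h2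
      have hi : i < τ.length := by omega
      rw [PFun.mem_fix_iff] at hx
      have hc : decide (τ.length ≤ i) = false := by simp; omega
      rcases hx with hx | ⟨a', ha', hx⟩
      · exfalso
        unfold selBody at hx
        rw [hc] at hx
        simp only [cond_false] at hx
        rw [Part.mem_bind_iff] at hx
        obtain ⟨b, _, hx⟩ := hx
        rw [Part.mem_map_iff] at hx
        obtain ⟨u, _, hx⟩ := hx
        exact absurd hx (by simp)
      · unfold selBody at ha'
        rw [hc] at ha'
        simp only [cond_false] at ha'
        rw [Part.mem_bind_iff] at ha'
        obtain ⟨b, hb, ha'⟩ := ha'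
        rw [Part.mem_map_iff] at ha'
        obtain ⟨u, hu, ha'⟩ := ha'
        have hDom : (f (τ.take i)).Dom := by
          rw [← preTake_eq (le_of_lt hi)]
          exact Part.dom_iff_mem.2 ⟨b, hb⟩
        obtain ⟨hΩ, -⟩ := Part.mem_assert_iff.1 hu
        rcases Nat.eq_or_lt_of_le h1 with rfl | hlt
        · exact ⟨hDom, hΩ⟩
        · have ha'' : a' = (τ, i+1, cond b (ρ ++ [τ.getD i 0]) ρ) := by
            have := Sum.inr.inj ha'
            exact this.symm
          subst ha''
          exact ih (i+1) _ x (by omega) hx j (by omega) h2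

lemma preTake_dropLast (τ : List ℕ) : preTake τ (τ.length - 1) = τ.dropLast := by
  rw [preTake_eq (by omega)]
  exact (List.dropLast_eq_take (l := τ)).symm

lemma wholeFn_dom_iff (x : ℕ × List ℕ) :
    (wholeFn Ω f C x).Dom ↔ x ∈ DSet Ω f C := by
  constructor
  · intro hdom
    obtain ⟨u, hu⟩ := Part.dom_iff_mem.1 hdom
    unfold wholeFn at hu
    rw [Part.mem_bind_iff] at hu
    obtain ⟨u1, hu1, hu⟩ := hu
    obtain ⟨hne, -⟩ := Part.mem_assert_iff.1 hu1
    rw [Part.mem_bind_iff] at hu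
    obtain ⟨ρ, hρ, hu⟩ := hu
    rw [Part.mem_bind_iff] at hu
    obtain ⟨b, hb, hu⟩ := hu
    rw [Part.mem_bind_iff] at hu
    obtain ⟨u2, hu2, hu⟩ := hu
    obtain ⟨hbt, -⟩ := Part.mem_assert_iff.1 hu2
    obtain ⟨hmemC, -⟩ := Part.mem_assert_iff.1 hu
    subst hbt
    have hconds := fix_conds x.2.length 0 ([] : List ℕ) ρ rfl hρ
    have hdomall : ∀ j < x.2.length, (f (x.2.take j)).Dom :=
      fun j hj => (hconds j (Nat.zero_le _) hj).1
    have hΩall : ∀ j < x.2.length, x.2.getD j 0 ∈ Ω :=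
      fun j hj => (hconds j (Nat.zero_le _) hj).2
    have hstrIn : strIn Ω x.2 := by
      intro a ha
      obtain ⟨j, hj, rfl⟩ := List.mem_iff_getElem.1 ha
      have := hΩall j hj
      rwa [List.getD_eq_getElem _ _ hj] at this
    have hfixkey : selT (gbF f) x.2 ∈ PFun.fix (selBody Ω f) (x.2, 0, []) :=
      fix_mem_of x.2.length 0 rfl (Nat.zero_le _)
        (fun j _ h2 => ⟨hdomall j h2, hΩall j h2⟩)
    have hρsel : ρ = selT (gbF f) x.2 := Part.mem_unique hρ hfixkey
    subst hρsel
    have hdl := preTake_dropLast x.2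
    refine ⟨⟨hstrIn, hdomall, hne, ?_, rfl⟩, hmemC⟩
    rw [← hdl]
    exact hb
  · rintro ⟨⟨hstrIn, hdomall, hne, htrue, -⟩, hmemC⟩
    rw [Part.dom_iff_mem]
    refine ⟨(), ?_⟩
    show () ∈ wholeFn Ω f C x
    unfold wholeFn
    rw [Part.mem_bind_iff]
    refine ⟨(), Part.mem_assert_iff.2 ⟨hne, Part.mem_some _⟩, ?_⟩
    rw [Part.mem_bind_iff]
    have hΩall : ∀ j, 0 ≤ j → j < x.2.length → (f (x.2.take j)).Dom ∧ x.2.getD j 0 ∈ Ω := by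
      intro j _ hj
      refine ⟨hdomall j hj, ?_⟩
      rw [List.getD_eq_getElem _ _ hj]
      exact hstrIn _ (List.getElem_mem hj)
    refine ⟨selT (gbF f) x.2, fix_mem_of x.2.length 0 rfl (Nat.zero_le _) hΩall, ?_⟩
    rw [Part.mem_bind_iff]
    refine ⟨true, ?_, ?_⟩
    · rw [preTake_dropLast x.2]
      exact htrue
    · rw [Part.mem_bind_iff]
      refine ⟨(), Part.mem_assert_iff.2 ⟨rfl, Part.mem_some _⟩, ?_⟩
      exact Part.mem_assert_iff.2 ⟨hmemC, Part.mem_some _⟩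

lemma DSet_re (hre : REPred (· ∈ Ω)) (hf : Partrec f) (hC : REPred (· ∈ C)) :
    REPred (· ∈ DSet Ω f C) :=
  (wholeFn_partrec hre hf hC).dom_re.of_eq fun x => wholeFn_dom_iff x

end Computability

section AlphaFacts

variable {Ω : Set ℕ} {f : List ℕ →. Bool} {α : ℕ → ℕ} {s : ℕ → ℕ}

lemma pre_length (α : ℕ → ℕ) (n : ℕ) : (pre α n).length = n := by simp [pre]

lemma pre_zero (α : ℕ → ℕ) : pre α 0 = [] := rfl

lemma pre_take (α : ℕ → ℕ) {i K : ℕ} (h : i ≤ K) : (pre α K).take i = pre α i := by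
  apply List.ext_getElem
  · simp [pre]; omega
  · intro j h1 h2
    simp [pre, List.getElem_take]

lemma pre_getD (α : ℕ → ℕ) {i K : ℕ} (h : i < K) : (pre α K).getD i 0 = α i := by
  rw [List.getD_eq_getElem _ _ (by simp [pre]; omega)]
  simp [pre]

lemma pre_succ (α : ℕ → ℕ) (n : ℕ) : pre α (n + 1) = pre α n ++ [α n] := by
  apply List.ext_getElem
  · simp [pre]
  · intro j h1 h2
    have hL : (pre α (n + 1))[j] = α j := by
      simp only [pre, List.getElem_ofFn]
    rw [hL]
    rcases Nat.lt_or_ge j n with hj | hj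
    · rw [List.getElem_append_left (by simpa [pre] using hj)]
      simp only [pre, List.getElem_ofFn]
    · have hj' : j = n := by
        simp only [pre, List.length_ofFn] at h1
        omega
      subst hj'
      rw [List.getElem_append_right (by simp [pre])]
      simp [pre]

lemma pre_strIn (hα : seqIn Ω α) (K : ℕ) : strIn Ω (pre α K) := by
  intro a ha
  rw [pre, List.mem_ofFn] at ha
  obtain ⟨i, rfl⟩ := ha
  exact hα _

lemma pre_dropLast (α : ℕ → ℕ) (K : ℕ) : (pre α (K + 1)).dropLast = pre α K := by
  rw [pre_succ]
  simp

lemma selA_const (g : List ℕ → Bool) (τ : List ℕ) :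
    ∀ {j₀ j₁ : ℕ}, j₀ ≤ j₁ → (∀ i, j₀ ≤ i → i < j₁ → g (τ.take i) = false) →
    selA g τ j₁ = selA g τ j₀ := by
  intro j₀ j₁ h hf
  induction j₁ with
  | zero =>
      have : j₀ = 0 := by omega
      simp [this]
  | succ n ih =>
      rcases Nat.lt_or_ge j₀ (n+1) with hlt | hge
      · have hj : j₀ ≤ n := by omega
        rw [selA, hf n hj (by omega)]
        simp [ih hj (fun i h1 h2 => hf i h1 (by omega))]
      · have : j₀ = n + 1 := by omega
        rw [this]

lemma gb_pre_iff (hdom : ∀ k, (f (pre α k)).Dom)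
    (hsel : ∀ k, true ∈ f (pre α (s k))) (hall : ∀ m, true ∈ f (pre α m) → ∃ k, s k = m)
    (i : ℕ) : gbF f (pre α i) = true ↔ ∃ k, s k = i := by
  rw [gbF_eq_true]
  exact ⟨hall i, fun ⟨k, hk⟩ => hk ▸ hsel k⟩

lemma gb_pre_false (hdom : ∀ k, (f (pre α k)).Dom)
    (hsel : ∀ k, true ∈ f (pre α (s k))) (hall : ∀ m, true ∈ f (pre α m) → ∃ k, s k = m)
    {i : ℕ} (h : ¬ ∃ k, s k = i) : gbF f (pre α i) = false := by
  cases hgb : gbF f (pre α i)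
  · rfl
  · exact absurd ((gb_pre_iff hdom hsel hall i).1 hgb) h

lemma selA_pre (hdom : ∀ k, (f (pre α k)).Dom) (hs : StrictMono s)
    (hsel : ∀ k, true ∈ f (pre α (s k))) (hall : ∀ m, true ∈ f (pre α m) → ∃ k, s k = m) :
    ∀ m K, s m < K →
      selA (gbF f) (pre α K) (s m + 1) = pre (fun k => α (s k)) (m + 1) := by
  have hstep : ∀ (K i : ℕ), i < K → selA (gbF f) (pre α K) (i + 1)
      = selA (gbF f) (pre α K) i ++ (if gbF f (pre α i) then [α i] else []) := by
    intro K i hi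
    rw [selA, pre_take α (le_of_lt hi), pre_getD α hi]
  have hconst : ∀ (K j₀ j₁ : ℕ), j₀ ≤ j₁ → j₁ ≤ K →
      (∀ i, j₀ ≤ i → i < j₁ → ¬ ∃ k, s k = i) →
      selA (gbF f) (pre α K) j₁ = selA (gbF f) (pre α K) j₀ := by
    intro K j₀ j₁ h hK hno
    refine selA_const _ _ h fun i h1 h2 => ?_
    rw [pre_take α (by omega)]
    exact gb_pre_false hdom hsel hall (hno i h1 h2)
  intro m
  induction m with
  | zero =>
      intro K hK
      rw [hstep K (s 0) hK, (gb_pre_iff hdom hsel hall (s 0)).2 ⟨0, rfl⟩]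
      rw [hconst K 0 (s 0) (Nat.zero_le _) (by omega) ?_]
      · simp [pre_succ, pre_zero, selA]
      · rintro i h1 h2 ⟨k, rfl⟩
        exact absurd h2 (by have := hs.le_iff_le.2 (Nat.zero_le k); omega)
  | succ m ih =>
      intro K hK
      have hm : s m < s (m+1) := hs (by omega)
      rw [hstep K (s (m+1)) hK, (gb_pre_iff hdom hsel hall (s (m+1))).2 ⟨m+1, rfl⟩]
      rw [hconst K (s m + 1) (s (m+1)) (by omega) (by omega) ?_]
      · rw [ih K (by omega)]
        simp [pre_succ]
      · rintro i h1 h2 ⟨k, rfl⟩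
        rcases Nat.lt_or_ge k (m+1) with hk | hk
        · have : s k ≤ s m := hs.le_iff_le.2 (by omega)
          omega
        · have : s (m+1) ≤ s k := hs.le_iff_le.2 hk
          omega

end AlphaFacts

end Stmt15Aux

/-- Closure of ensembles under selection by a partial computable
generalized selection function `f : Ω* →. Bool` (`true` = YES): if `f` is defined on
all prefixes of `α` and selects infinitely many indices, then the subsequence of
selected elements of the Martin-Löf `P`-random `α` is again Martin-Löf `P`-random.
Here `s : ℕ → ℕ` is the strictly increasing enumeration of the selected indices
(`s k` is the `k`-th index `ℓ` with `f (α↾ℓ) = YES`), and `β k = α (s k)`. -/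
theorem stmt15 (Ω : Set ℕ) (hre : REPred (· ∈ Ω)) (hinf : Ω.Infinite)
    (P : ℕ → ℝ) (hP : isProb Ω P)
    (α : ℕ → ℕ) (hα : seqIn Ω α) (hrand : MLRandom Ω P α)
    (f : List ℕ →. Bool) (hfcomp : Partrec f)
    (hdom : ∀ k : ℕ, (f (pre α k)).Dom)
    (s : ℕ → ℕ) (hs : StrictMono s)
    (hsel : ∀ k, true ∈ f (pre α (s k)))
    (hall : ∀ m, true ∈ f (pre α m) → ∃ k, s k = m) :
    MLRandom Ω P (fun k => α (s k)) := by
  intro C hC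
  obtain ⟨hCre, hCin, hCtest⟩ := hC
  have hDre : REPred (· ∈ Stmt15Aux.DSet Ω f C) := Stmt15Aux.DSet_re hre hfcomp hCre
  have hDtest : MLTest Ω P (Stmt15Aux.DSet Ω f C) := by
    refine ⟨hDre, ?_, ?_⟩
    · rintro x ⟨⟨hin, -, -, -, -⟩, -⟩
      exact hin
    · intro n hn
      exact ⟨Stmt15Aux.D_prefixFree Ω f C n (hCtest n hn).1,
        lt_of_le_of_lt (Stmt15Aux.sumD hP f hCin n) (hCtest n hn).2⟩
  obtain ⟨n, hn1, hnα⟩ := hrand _ hDtest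
  refine ⟨n, hn1, ?_⟩
  intro hβ
  obtain ⟨m, hm⟩ := hβ
  cases m with
  | zero =>
      have hm' : ([] : List ℕ) ∈ {σ | (n, σ) ∈ C} := by
        rw [← Stmt15Aux.pre_zero (fun k => α (s k))]
        exact hm
      have h1 : (1 : ℝ≥0∞) ≤ mOpen P {σ | (n, σ) ∈ C} := by
        have h := ENNReal.le_tsum (f := fun σ : {σ | (n, σ) ∈ C} =>
          ENNReal.ofReal (strP P (σ : List ℕ))) ⟨[], hm'⟩
        simpa [mOpen, Stmt15Aux.strP_nil] using h
      have h2 := (hCtest n hn1).2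
      have h3 : ((2 : ℝ≥0∞))⁻¹ ^ n ≤ 1 :=
        pow_le_one' (ENNReal.inv_le_one.2 one_le_two) n
      exact absurd (lt_of_le_of_lt h1 h2) (not_lt.2 h3)
  | succ m' =>
      apply hnα
      refine ⟨s m' + 1, ?_⟩
      have hsel' : Stmt15Aux.selT (Stmt15Aux.gbF f) (pre α (s m' + 1))
          = pre (fun k => α (s k)) (m' + 1) := by
        show Stmt15Aux.selA _ _ (pre α (s m' + 1)).length = _
        rw [Stmt15Aux.pre_length]
        exact Stmt15Aux.selA_pre hdom hs hsel hall m' (s m' + 1) (by omega)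
      show pre α (s m' + 1) ∈ Stmt15Aux.FSet Ω f
          (Stmt15Aux.selT (Stmt15Aux.gbF f) (pre α (s m' + 1))) ∧
        (n, Stmt15Aux.selT (Stmt15Aux.gbF f) (pre α (s m' + 1))) ∈ C
      refine ⟨⟨Stmt15Aux.pre_strIn hα _, ?_, ?_, ?_, rfl⟩, ?_⟩
      · intro i hi
        rw [Stmt15Aux.pre_length] at hi
        rw [Stmt15Aux.pre_take α (by omega)]
        exact hdom i
      · intro e
        have := congrArg List.length e
        rw [Stmt15Aux.pre_length] at this
        simp at this
      · rw [Stmt15Aux.pre_dropLast]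
        exact hsel m'
      · rw [hsel']
        exact hm
end
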